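/- arXiv:2104.07424 — 6 statements merged into one kernel-verified Lean document; each statement's English description precedes it below -/
import Mathlib

section
/- Let (ξ_n)_{n≥1} be i.i.d. nonnegative real random variables with mean a = E[ξ₁] ∈ (0,∞) and let μ(t) = #{n ≥ 1 : ξ₁ + ⋯ + ξ_n ≤ t} be the renewal counting process. Let a′ ∈ (0,a), let x > 0, and let (v_p)_{p≥1} be positive reals with v_p → 0 such that for some δ > 0 one has v_p ≤ p^{−δ} for all sufficiently large p. Then p·P(v_p·μ(x/v_p)/x ≥ 1/a′) → 0 as p → ∞. (This is Assumption R2 of the paper for a renewal process, valid for every a′ < a.) -/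
open MeasureTheory ProbabilityTheory Filter

set_option maxHeartbeats 1000000 in
/-- For the renewal counting process `μ` of i.i.d. nonnegative random
variables with mean `a`, and any `a' ∈ (0,a)`, `x > 0`, and positive scaling constants
`v_p → 0` with `v_p ≤ p^{-δ}` eventually for some `δ > 0`, one has
`p · P(v_p μ(x/v_p)/x ≥ 1/a') → 0` (Assumption R2 for a renewal process). -/
theorem renewal_assumption_R2
    {Ω : Type*} [MeasureSpace Ω] [IsProbabilityMeasure (ℙ : Measure Ω)]
    (ξ : ℕ → Ω → ℝ)
    (hmeas : ∀ n, Measurable (ξ n))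
    (hnonneg : ∀ n ω, 0 ≤ ξ n ω)
    (hindep : iIndepFun ξ ℙ)
    (hident : ∀ n, Measure.map (ξ n) ℙ = Measure.map (ξ 0) ℙ)
    (hint : Integrable (ξ 0) ℙ)
    (a : ℝ) (ha : 0 < a) (hmean : (∫ ω, ξ 0 ω) = a)
    (μ : ℝ → Ω → ℕ)
    (hμ : ∀ t ω, μ t ω = Set.ncard {n : ℕ | 1 ≤ n ∧ ∑ k ∈ Finset.range n, ξ k ω ≤ t})
    (a' : ℝ) (ha'0 : 0 < a') (ha'a : a' < a)
    (x : ℝ) (hx : 0 < x)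
    (v : ℕ → ℝ) (hv : ∀ p, 0 < v p) (hv0 : Tendsto v atTop (nhds 0))
    (hvp : ∃ δ > (0 : ℝ), ∀ᶠ p : ℕ in atTop, v p ≤ (p : ℝ) ^ (-δ)) :
    Tendsto (fun p : ℕ =>
        (p : ℝ) * (ℙ {ω | 1 / a' ≤ v p * (μ (x / v p) ω : ℝ) / x}).toReal)
      atTop (nhds 0) := by
  obtain ⟨δ, hδ, hvδ⟩ := hvp
  set a'' : ℝ := (a' + a) / 2 with ha''def
  have ha''1 : a' < a'' := by rw [ha''def]; linarith
  have ha''2 : a'' < a := by rw [ha''def]; linarith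
  have ha''0 : 0 < a'' := lt_trans ha'0 ha''1
  -- Step A: choose θ > 0 with E[exp(-θ ξ₀)] ≤ exp(-(θ a''))
  obtain ⟨θ, hθ0, hθE⟩ : ∃ θ : ℝ, 0 < θ ∧
      (∫ ω, Real.exp (-(θ * ξ 0 ω))) ≤ Real.exp (-(θ * a'')) := by
    set F : ℕ → Ω → ℝ :=
      fun k ω => (1 - Real.exp (-(((k : ℝ) + 1)⁻¹ * ξ 0 ω))) * ((k : ℝ) + 1) with hF
    have hFmeas : ∀ k, Measurable (F k) := by
      intro k
      exact (((((hmeas 0).const_mul _).neg).exp).const_sub 1).mul_const _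
    have hFlim : Tendsto (fun k => ∫ ω, F k ω) atTop (nhds a) := by
      rw [← hmean]
      apply tendsto_integral_of_dominated_convergence (fun ω => ξ 0 ω)
        (fun k => (hFmeas k).aestronglyMeasurable) hint
      · intro k
        filter_upwards with ω
        have hu := hnonneg 0 ω
        have hs : (0 : ℝ) < ((k : ℝ) + 1)⁻¹ := by positivity
        have h1 : Real.exp (-(((k : ℝ) + 1)⁻¹ * ξ 0 ω)) ≤ 1 := by
          apply Real.exp_le_one_iff.mpr; nlinarith
        have h2 : 1 - Real.exp (-(((k : ℝ) + 1)⁻¹ * ξ 0 ω)) ≤ ((k : ℝ) + 1)⁻¹ * ξ 0 ω := by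
          have := Real.add_one_le_exp (-(((k : ℝ) + 1)⁻¹ * ξ 0 ω)); linarith
        have hk1 : (0 : ℝ) < (k : ℝ) + 1 := by positivity
        have h3 := mul_le_mul_of_nonneg_right h2 hk1.le
        have h4 : ((k : ℝ) + 1)⁻¹ * ξ 0 ω * ((k : ℝ) + 1) = ξ 0 ω := by
          field_simp
        have hFval : F k ω = (1 - Real.exp (-(((k : ℝ) + 1)⁻¹ * ξ 0 ω))) * ((k : ℝ) + 1) := rfl
        have h5 : 0 ≤ (1 - Real.exp (-(((k : ℝ) + 1)⁻¹ * ξ 0 ω))) * ((k : ℝ) + 1) :=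
          mul_nonneg (by linarith) hk1.le
        rw [hFval, Real.norm_eq_abs, abs_of_nonneg h5]
        linarith
      · filter_upwards with ω
        have hd : HasDerivAt (fun s : ℝ => 1 - Real.exp (-(s * ξ 0 ω))) (ξ 0 ω) 0 := by
          have h1 : HasDerivAt (fun s : ℝ => -(s * ξ 0 ω)) (-(ξ 0 ω)) 0 := by
            simpa using ((hasDerivAt_id (0 : ℝ)).mul_const (ξ 0 ω)).fun_neg
          have h2 := h1.exp
          have h3 := h2.const_sub 1
          simpa using h3
        have hslope := hasDerivAt_iff_tendsto_slope.mp hd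
        have hseq : Tendsto (fun k : ℕ => ((k : ℝ) + 1)⁻¹) atTop (nhdsWithin 0 {(0:ℝ)}ᶜ) := by
          apply tendsto_nhdsWithin_of_tendsto_nhds_of_eventually_within
          · have := tendsto_one_div_add_atTop_nhds_zero_nat (𝕜 := ℝ)
            simpa [one_div] using this
          · filter_upwards with k
            simp only [Set.mem_compl_iff, Set.mem_singleton_iff]
            positivity
        have hcomp := hslope.comp hseq
        refine hcomp.congr fun k => ?_
        have hk1 : ((k : ℝ) + 1) ≠ 0 := by positivity
        simp only [Function.comp_apply, slope_def_field, hF, zero_mul, neg_zero,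
          Real.exp_zero, sub_zero, sub_self, sub_sub_cancel_left]
        rw [div_eq_mul_inv, inv_inv]
    have hev : ∀ᶠ k in atTop, a'' < ∫ ω, F k ω := hFlim.eventually (eventually_gt_nhds ha''2)
    obtain ⟨k, hk⟩ := hev.exists
    refine ⟨((k : ℝ) + 1)⁻¹, by positivity, ?_⟩
    set θ := ((k : ℝ) + 1)⁻¹ with hθdef
    have hθpos : 0 < θ := by positivity
    have hEint : Integrable (fun ω => Real.exp (-(θ * ξ 0 ω))) ℙ := by
      refine Integrable.mono' (integrable_const 1)
        ((((hmeas 0).const_mul θ).neg).exp).aestronglyMeasurable ?_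
      filter_upwards with ω
      rw [Real.norm_eq_abs, abs_of_nonneg (Real.exp_pos _).le]
      apply Real.exp_le_one_iff.mpr
      have := hnonneg 0 ω
      nlinarith
    have hFk : ∫ ω, F k ω = (1 - ∫ ω, Real.exp (-(θ * ξ 0 ω))) * ((k : ℝ) + 1) := by
      rw [hF]
      rw [integral_mul_const]
      congr 1
      rw [integral_sub (integrable_const 1) hEint]
      simp
    rw [hFk] at hk
    have hθk : θ * ((k : ℝ) + 1) = 1 := by
      rw [hθdef]; field_simp
    have hE1 : ∫ ω, Real.exp (-(θ * ξ 0 ω)) ≤ 1 - θ * a'' := by nlinarith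
    have := Real.add_one_le_exp (-(θ * a''))
    linarith
  -- the integral E and its basic properties
  set E : ℝ := ∫ ω, Real.exp (-(θ * ξ 0 ω)) with hEdef
  have hE0 : 0 ≤ E := integral_nonneg fun ω => (Real.exp_pos _).le
  have hXmeas : ∀ n : ℕ, Measurable (∑ i ∈ Finset.range n, ξ i) := by
    intro n
    rw [Finset.sum_fn]
    exact Finset.measurable_sum _ fun i _ => hmeas i
  -- identical mgf's
  have hmgf_eq : ∀ i, mgf (ξ i) ℙ (-θ) = E := by
    intro i
    have hcont : ∀ j : ℕ, mgf (ξ j) ℙ (-θ) = ∫ y, Real.exp (-θ * y) ∂(Measure.map (ξ j) ℙ) := by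
      intro j
      have hgme : Measurable fun y : ℝ => Real.exp (-θ * y) := (measurable_id.const_mul (-θ)).exp
      rw [mgf]
      exact (integral_map (hmeas j).aemeasurable hgme.aestronglyMeasurable).symm
    rw [hcont i, hident i, ← hcont 0, mgf, hEdef]
    simp [neg_mul]
  -- Chernoff bound
  have hchern : ∀ (n : ℕ) (T : ℝ),
      (ℙ {ω | ∑ k ∈ Finset.range n, ξ k ω ≤ T}).toReal ≤ Real.exp (θ * T) * E ^ n := by
    intro n T
    have hint_exp : Integrable (fun ω => Real.exp (-θ * (∑ i ∈ Finset.range n, ξ i) ω)) ℙ := by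
      refine Integrable.mono' (integrable_const 1)
        (((hXmeas n).const_mul (-θ)).exp).aestronglyMeasurable ?_
      filter_upwards with ω
      rw [Real.norm_eq_abs, abs_of_nonneg (Real.exp_pos _).le]
      apply Real.exp_le_one_iff.mpr
      have : 0 ≤ (∑ i ∈ Finset.range n, ξ i) ω := by
        rw [Finset.sum_apply]
        exact Finset.sum_nonneg fun i _ => hnonneg i ω
      nlinarith
    have h := measure_le_le_exp_mul_mgf (μ := ℙ) (X := ∑ i ∈ Finset.range n, ξ i) T
      (neg_nonpos.mpr hθ0.le) hint_exp
    rw [hindep.mgf_sum hmeas (Finset.range n)] at h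
    have hprod : (∏ i ∈ Finset.range n, mgf (ξ i) ℙ (-θ)) = E ^ n := by
      rw [Finset.prod_congr rfl fun i _ => hmgf_eq i, Finset.prod_const, Finset.card_range]
    rw [hprod, neg_neg] at h
    have hset : {ω | (∑ i ∈ Finset.range n, ξ i) ω ≤ T}
        = {ω | ∑ k ∈ Finset.range n, ξ k ω ≤ T} := by
      ext ω; simp [Finset.sum_apply]
    rw [hset] at h
    exact h
  -- event inclusion
  have hsub : ∀ p : ℕ, {ω | 1 / a' ≤ v p * (μ (x / v p) ω : ℝ) / x} ⊆
      {ω | ∑ k ∈ Finset.range ⌈x / (a' * v p)⌉₊, ξ k ω ≤ x / v p} := by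
    intro p ω hω
    simp only [Set.mem_setOf_eq] at hω ⊢
    have hvp0 := hv p
    have hμω : x / (a' * v p) ≤ (μ (x / v p) ω : ℝ) := by
      rw [le_div_iff₀ hx] at hω
      rw [div_le_iff₀ (by positivity)]
      have h5 := mul_le_mul_of_nonneg_left hω ha'0.le
      have h6 : a' * (1 / a' * x) = x := by field_simp
      nlinarith
    have hn₀le : ⌈x / (a' * v p)⌉₊ ≤ μ (x / v p) ω := Nat.ceil_le.mpr hμω
    have hn₀pos : 1 ≤ ⌈x / (a' * v p)⌉₊ := Nat.one_le_ceil_iff.mpr (by positivity)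
    by_contra hcon
    push_neg at hcon
    have hsubset : {n : ℕ | 1 ≤ n ∧ ∑ k ∈ Finset.range n, ξ k ω ≤ x / v p} ⊆
        ↑(Finset.Ico 1 ⌈x / (a' * v p)⌉₊) := by
      rintro n ⟨hn1, hnsum⟩
      simp only [Finset.coe_Ico, Set.mem_Ico]
      refine ⟨hn1, ?_⟩
      by_contra hge
      push_neg at hge
      have hmono : ∑ k ∈ Finset.range ⌈x / (a' * v p)⌉₊, ξ k ω ≤ ∑ k ∈ Finset.range n, ξ k ω :=
        Finset.sum_le_sum_of_subset_of_nonneg (Finset.range_subset_range.mpr hge)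
          fun i _ _ => hnonneg i ω
      linarith
    have hcard := Set.ncard_le_ncard hsubset (Finset.Ico 1 ⌈x / (a' * v p)⌉₊).finite_toSet
    rw [Set.ncard_coe_finset, Nat.card_Ico] at hcard
    rw [hμ] at hn₀le
    omega
  -- the constant c
  set c : ℝ := θ * x * (a'' - a') / a' with hcdef
  have hc0 : 0 < c := by
    apply div_pos _ ha'0
    have : 0 < a'' - a' := by linarith
    positivity
  -- eventual bound
  have hbound : ∀ᶠ p : ℕ in atTop,
      (p : ℝ) * (ℙ {ω | 1 / a' ≤ v p * (μ (x / v p) ω : ℝ) / x}).toReal ≤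
        (p : ℝ) * Real.exp (-(c * (p : ℝ) ^ δ)) := by
    filter_upwards [hvδ, eventually_ge_atTop 1] with p hpv hp1
    have hvp0 := hv p
    set n₀ := ⌈x / (a' * v p)⌉₊ with hn₀def
    have hP1 : (ℙ {ω | 1 / a' ≤ v p * (μ (x / v p) ω : ℝ) / x}).toReal ≤
        (ℙ {ω | ∑ k ∈ Finset.range n₀, ξ k ω ≤ x / v p}).toReal :=
      ENNReal.toReal_mono (measure_ne_top _ _) (measure_mono (hsub p))
    have hP2 := hchern n₀ (x / v p)
    have hpow : E ^ n₀ ≤ Real.exp (-(θ * a'')) ^ n₀ := pow_le_pow_left₀ hE0 hθE n₀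
    have hP3 : Real.exp (θ * (x / v p)) * E ^ n₀ ≤
        Real.exp (θ * (x / v p) + (n₀ : ℝ) * (-(θ * a''))) := by
      rw [Real.exp_add, Real.exp_nat_mul]
      exact mul_le_mul_of_nonneg_left hpow (Real.exp_pos _).le
    have hn₀ge : x / (a' * v p) ≤ (n₀ : ℝ) := Nat.le_ceil _
    have hexp1 : θ * (x / v p) + (n₀ : ℝ) * (-(θ * a'')) ≤ -(c / v p) := by
      have h1 : θ * a'' * (x / (a' * v p)) ≤ θ * a'' * (n₀ : ℝ) :=
        mul_le_mul_of_nonneg_left hn₀ge (by positivity)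
      have h2 : θ * (x / v p) - θ * a'' * (x / (a' * v p)) = -(c / v p) := by
        rw [hcdef]; field_simp; ring
      nlinarith
    have hpδ : (1 : ℝ) ≤ (p : ℝ) := by exact_mod_cast hp1
    have hpδ0 : 0 < (p : ℝ) ^ δ := Real.rpow_pos_of_pos (by linarith) δ
    have hexp2 : c * (p : ℝ) ^ δ ≤ c / v p := by
      rw [le_div_iff₀ hvp0]
      have hv' : v p ≤ ((p : ℝ) ^ δ)⁻¹ := by
        rwa [← Real.rpow_neg (by linarith)]
      have h7 := mul_le_mul_of_nonneg_left hv' (le_of_lt hpδ0)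
      rw [mul_inv_cancel₀ (ne_of_gt hpδ0)] at h7
      calc c * (p : ℝ) ^ δ * v p = c * ((p : ℝ) ^ δ * v p) := by ring
        _ ≤ c * 1 := mul_le_mul_of_nonneg_left h7 hc0.le
        _ = c := mul_one c
    calc (p : ℝ) * (ℙ {ω | 1 / a' ≤ v p * (μ (x / v p) ω : ℝ) / x}).toReal
        ≤ (p : ℝ) * (Real.exp (θ * (x / v p)) * E ^ n₀) := by
          apply mul_le_mul_of_nonneg_left (le_trans hP1 hP2) (by positivity)
      _ ≤ (p : ℝ) * Real.exp (θ * (x / v p) + (n₀ : ℝ) * (-(θ * a''))) :=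
          mul_le_mul_of_nonneg_left hP3 (by positivity)
      _ ≤ (p : ℝ) * Real.exp (-(c * (p : ℝ) ^ δ)) := by
          apply mul_le_mul_of_nonneg_left _ (by positivity)
          apply Real.exp_le_exp.mpr
          have := hexp1
          linarith
  -- the comparison sequence tends to 0
  have hg : Tendsto (fun p : ℕ => (p : ℝ) * Real.exp (-(c * (p : ℝ) ^ δ))) atTop (nhds 0) := by
    have h1 : Tendsto (fun y : ℝ => y ^ (1 / δ) * Real.exp (-c * y)) atTop (nhds 0) :=
      tendsto_rpow_mul_exp_neg_mul_atTop_nhds_zero (1 / δ) c hc0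
    have h2 : Tendsto (fun p : ℕ => (p : ℝ) ^ δ) atTop atTop :=
      (tendsto_rpow_atTop hδ).comp tendsto_natCast_atTop_atTop
    have h3 := h1.comp h2
    refine h3.congr fun p => ?_
    simp only [Function.comp_apply]
    rw [← Real.rpow_mul (Nat.cast_nonneg p), mul_one_div, div_self (ne_of_gt hδ),
      Real.rpow_one, neg_mul]
  exact squeeze_zero'
    (Eventually.of_forall fun p => mul_nonneg (Nat.cast_nonneg p) ENNReal.toReal_nonneg)
    hbound hg
end

section
/- Let ℓ* > 0 and for each t ≥ 0 let N_t be a Poisson random variable with mean ℓ*·t. Let a′ > 0 satisfy a′·ℓ* < 1, let x > 0, and let (v_p)_{p≥1} be positive reals with v_p → 0 such that for some δ > 0 one has v_p ≤ p^{−δ} for all sufficiently large p. Then p·P(N_{x/v_p} ≥ x/(a′·v_p)) → 0 as p → ∞. (This establishes Assumption R2 of the paper for any offspring point process dominated by a Poisson process of intensity ℓ*, for every a′ < 1/ℓ*.) -/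
open MeasureTheory ProbabilityTheory Filter


lemma aux_kappa_pos {c : ℝ} (hc : 1 < c) : 0 < 1 + c * Real.log c - c := by
  have h := Real.log_lt_sub_one_of_pos (x := c⁻¹) (by positivity) (by
    intro h; rw [inv_eq_one] at h; linarith)
  rw [Real.log_inv] at h
  have hc0 : (0:ℝ) < c := by linarith
  have : c * (-Real.log c) < c * (c⁻¹ - 1) := by
    exact (mul_lt_mul_iff_right₀ hc0).2 h
  rw [mul_sub, mul_inv_cancel₀ (ne_of_gt hc0)] at this
  nlinarith

/-- Chernoff-type tail bound for the Poisson distribution. -/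
lemma aux_tail_sum_le (lam c : ℝ) (hlam : 0 < lam) (hc : 1 < c) (m : ℕ)
    (hm1 : c * lam ≤ m) (hm2 : (m : ℝ) ≤ c * lam + 1) :
    ∑' k : ℕ, Real.exp (-lam) * lam ^ (m + k) / ((m + k).factorial : ℝ)
      ≤ Real.exp 1 * (c / (c - 1)) * Real.exp (-((1 + c * Real.log c - c) * lam)) := by
  have hc0 : (0:ℝ) < c := by linarith
  have hm0 : (0:ℝ) < m := lt_of_lt_of_le (by positivity) hm1
  set A : ℝ := Real.exp (-lam) * lam ^ m / (m.factorial : ℝ) with hA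
  have hr0 : (0:ℝ) ≤ c⁻¹ := by positivity
  have hr1 : c⁻¹ < 1 := inv_lt_one_of_one_lt₀ hc
  -- termwise bound
  have hterm : ∀ k : ℕ,
      Real.exp (-lam) * lam ^ (m + k) / ((m + k).factorial : ℝ) ≤ A * c⁻¹ ^ k := by
    intro k
    have hfac : (m.factorial : ℝ) * ((m:ℝ) + 1) ^ k ≤ ((m + k).factorial : ℝ) := by
      have := Nat.factorial_mul_pow_le_factorial (m := m) (n := k)
      calc (m.factorial : ℝ) * ((m:ℝ) + 1) ^ k
          = ((m.factorial * (m + 1) ^ k : ℕ) : ℝ) := by push_cast; ring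
        _ ≤ ((m + k).factorial : ℝ) := by exact_mod_cast this
    have hlk : lam ^ k ≤ (c⁻¹ * ((m:ℝ) + 1)) ^ k := by
      apply pow_le_pow_left₀ (le_of_lt hlam)
      rw [inv_mul_eq_div, le_div_iff₀ hc0]
      nlinarith
    have hpos1 : (0:ℝ) < (m.factorial : ℝ) * ((m:ℝ) + 1) ^ k := by positivity
    have hpos2 : (0:ℝ) < ((m + k).factorial : ℝ) := by positivity
    calc Real.exp (-lam) * lam ^ (m + k) / ((m + k).factorial : ℝ)
        ≤ Real.exp (-lam) * lam ^ (m + k) / ((m.factorial : ℝ) * ((m:ℝ) + 1) ^ k) := by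
          apply div_le_div_of_nonneg_left _ hpos1 hfac
          positivity
      _ = A * (lam / ((m:ℝ) + 1)) ^ k := by
          rw [hA, pow_add, div_pow]; field_simp
      _ ≤ A * c⁻¹ ^ k := by
          apply mul_le_mul_of_nonneg_left _ (by rw [hA]; positivity)
          apply pow_le_pow_left₀ (by positivity)
          rw [inv_eq_one_div, div_le_div_iff₀ (by positivity) hc0]
          nlinarith
  have hsumR : Summable (fun k : ℕ => A * c⁻¹ ^ k) :=
    (summable_geometric_of_lt_one hr0 hr1).mul_left A
  have hnn : ∀ k : ℕ, 0 ≤ Real.exp (-lam) * lam ^ (m + k) / ((m + k).factorial : ℝ) := by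
    intro k; positivity
  have hsumL : Summable (fun k : ℕ =>
      Real.exp (-lam) * lam ^ (m + k) / ((m + k).factorial : ℝ)) :=
    Summable.of_nonneg_of_le hnn hterm hsumR
  calc ∑' k : ℕ, Real.exp (-lam) * lam ^ (m + k) / ((m + k).factorial : ℝ)
      ≤ ∑' k : ℕ, A * c⁻¹ ^ k := Summable.tsum_le_tsum hterm hsumL hsumR
    _ = A * (1 - c⁻¹)⁻¹ := by rw [tsum_mul_left, tsum_geometric_of_lt_one hr0 hr1]
    _ = A * (c / (c - 1)) := by
        congr 1
        rw [inv_eq_iff_eq_inv]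
        field_simp
    _ ≤ Real.exp 1 * (c / (c - 1)) * Real.exp (-((1 + c * Real.log c - c) * lam)) := by
        have hcc : (0:ℝ) < c / (c - 1) := by
          apply div_pos hc0; linarith
        have hAle : A ≤ Real.exp 1 * Real.exp (-((1 + c * Real.log c - c) * lam)) := by
          have hlc : 0 < Real.log c := Real.log_pos hc
          -- lam^m / m! ≤ exp (m - m log c)
          have h1 : lam ^ m / (m.factorial : ℝ) ≤ Real.exp (m - m * Real.log c) := by
            have hmm : ((m:ℝ)) ^ m / (m.factorial : ℝ) ≤ Real.exp m :=
              Real.pow_div_factorial_le_exp (x := (m:ℝ)) (by positivity) m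
            have h2 : (lam / (m:ℝ)) ^ m ≤ (c⁻¹) ^ m := by
              apply pow_le_pow_left₀ (by positivity)
              rw [div_le_iff₀ hm0, inv_mul_eq_div, le_div_iff₀ hc0]
              nlinarith
            have h3 : (c⁻¹ : ℝ) ^ m = Real.exp (-((m:ℝ) * Real.log c)) := by
              conv_lhs => rw [← Real.exp_log (show (0:ℝ) < c⁻¹ by positivity)]
              rw [← Real.exp_nat_mul, Real.log_inv]
              ring_nf
            calc lam ^ m / (m.factorial : ℝ)
                = (lam / (m:ℝ)) ^ m * ((m:ℝ) ^ m / (m.factorial : ℝ)) := by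
                  rw [div_pow]; field_simp
              _ ≤ (c⁻¹) ^ m * Real.exp m := by
                  apply mul_le_mul h2 hmm (by positivity) (by positivity)
              _ = Real.exp ((m:ℝ) - (m:ℝ) * Real.log c) := by
                  rw [h3, ← Real.exp_add]; ring_nf
          have hexp : -lam + ((m:ℝ) - (m:ℝ) * Real.log c)
              ≤ 1 + -((1 + c * Real.log c - c) * lam) := by
            rcases le_total (Real.log c) 1 with h | h
            · nlinarith
            · nlinarith
          calc A = Real.exp (-lam) * (lam ^ m / (m.factorial : ℝ)) := by
                rw [hA]; ring
            _ ≤ Real.exp (-lam) * Real.exp ((m:ℝ) - (m:ℝ) * Real.log c) := by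
                apply mul_le_mul_of_nonneg_left h1 (by positivity)
            _ = Real.exp (-lam + ((m:ℝ) - (m:ℝ) * Real.log c)) := by
                rw [← Real.exp_add]
            _ ≤ Real.exp (1 + -((1 + c * Real.log c - c) * lam)) := Real.exp_le_exp.2 hexp
            _ = Real.exp 1 * Real.exp (-((1 + c * Real.log c - c) * lam)) := Real.exp_add _ _
        calc A * (c / (c - 1))
            ≤ (Real.exp 1 * Real.exp (-((1 + c * Real.log c - c) * lam))) * (c / (c - 1)) :=
              mul_le_mul_of_nonneg_right hAle (le_of_lt hcc)
          _ = Real.exp 1 * (c / (c - 1)) * Real.exp (-((1 + c * Real.log c - c) * lam)) := by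
              ring
/-- If `N t` is Poisson with mean `ℓ* · t`, `a' ℓ* < 1`, `x > 0` and
`v_p → 0` with `v_p ≤ p^{-δ}` eventually for some `δ > 0`, then
`p · P(N_{x/v_p} ≥ x/(a' v_p)) → 0` (Assumption R2 for a process dominated by a Poisson
process of intensity `ℓ*`). -/
theorem poisson_assumption_R2
    {Ω : Type*} [MeasureSpace Ω] [IsProbabilityMeasure (ℙ : Measure Ω)]
    (lstar : ℝ) (hl : 0 < lstar)
    (N : ℝ → Ω → ℕ)
    (hNmeas : ∀ t, Measurable (N t))
    (hN : ∀ t : ℝ, 0 ≤ t → ∀ k : ℕ,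
      (ℙ {ω | N t ω = k}).toReal
        = Real.exp (-(lstar * t)) * (lstar * t) ^ k / (Nat.factorial k))
    (a' : ℝ) (ha' : 0 < a') (hal : a' * lstar < 1)
    (x : ℝ) (hx : 0 < x)
    (v : ℕ → ℝ) (hv : ∀ p, 0 < v p) (hv0 : Tendsto v atTop (nhds 0))
    (hvp : ∃ δ > (0 : ℝ), ∀ᶠ p : ℕ in atTop, v p ≤ (p : ℝ) ^ (-δ)) :
    Tendsto (fun p : ℕ =>
        (p : ℝ) * (ℙ {ω | x / (a' * v p) ≤ (N (x / v p) ω : ℝ)}).toReal)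
      atTop (nhds 0) := by
  obtain ⟨δ, hδ, hev⟩ := hvp
  have hal0 : 0 < a' * lstar := mul_pos ha' hl
  set c : ℝ := (a' * lstar)⁻¹ with hcdef
  have hc : 1 < c := (one_lt_inv₀ hal0).2 hal
  have hc0 : (0:ℝ) < c := by linarith
  set κ : ℝ := 1 + c * Real.log c - c with hκdef
  have hκ : 0 < κ := aux_kappa_pos hc
  set C : ℝ := Real.exp 1 * (c / (c - 1)) with hCdef
  have hC : 0 < C := by
    apply mul_pos (Real.exp_pos 1)
    apply div_pos hc0; linarith
  -- pointwise tail bound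
  have key : ∀ p : ℕ, (ℙ {ω | x / (a' * v p) ≤ ((N (x / v p)) ω : ℝ)}).toReal
      ≤ C * Real.exp (-(κ * (lstar * (x / v p)))) := by
    intro p
    have hvp0 := hv p
    set t := x / v p with ht
    have ht0' : 0 < t := div_pos hx hvp0
    set lam := lstar * t with hlam'
    have hlam : 0 < lam := mul_pos hl ht0'
    have hM : x / (a' * v p) = c * lam := by
      rw [hcdef, hlam', ht]
      field_simp
    set m := ⌈c * lam⌉₊ with hm
    have hm1 : c * lam ≤ (m : ℝ) := Nat.le_ceil _
    have hm2 : (m : ℝ) ≤ c * lam + 1 := le_of_lt (Nat.ceil_lt_add_one (by positivity))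
    have hset : {ω | x / (a' * v p) ≤ ((N t) ω : ℝ)} = ⋃ k : ℕ, N t ⁻¹' {m + k} := by
      ext ω
      simp only [Set.mem_setOf_eq, Set.mem_iUnion, Set.mem_preimage,
        Set.mem_singleton_iff, hM]
      constructor
      · intro h
        have hle : m ≤ N t ω := Nat.ceil_le.2 h
        exact ⟨N t ω - m, by omega⟩
      · rintro ⟨k, hk⟩
        have hle : m ≤ N t ω := by omega
        exact hm1.trans (by exact_mod_cast hle)
    rw [hset]
    have hmeasU : ℙ (⋃ k : ℕ, N t ⁻¹' {m + k}) = ∑' k : ℕ, ℙ (N t ⁻¹' {m + k}) := by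
      apply measure_iUnion
      · intro i j hij
        apply Set.disjoint_left.2
        intro ω h1 h2
        simp only [Set.mem_preimage, Set.mem_singleton_iff] at h1 h2
        omega
      · intro k; exact hNmeas t (measurableSet_singleton _)
    rw [hmeasU, ENNReal.tsum_toReal_eq (fun k => measure_ne_top _ _)]
    have hpmf : ∀ k : ℕ, (ℙ (N t ⁻¹' {m + k})).toReal
        = Real.exp (-lam) * lam ^ (m + k) / (((m + k).factorial : ℕ) : ℝ) := by
      intro k
      have h := hN t (le_of_lt ht0') (m + k)
      rw [show N t ⁻¹' {m + k} = {ω | N t ω = m + k} from rfl, h, ← hlam']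
    calc ∑' k : ℕ, (ℙ (N t ⁻¹' {m + k})).toReal
        = ∑' k : ℕ, Real.exp (-lam) * lam ^ (m + k) / (((m + k).factorial : ℕ) : ℝ) :=
          tsum_congr hpmf
      _ ≤ Real.exp 1 * (c / (c - 1)) * Real.exp (-(κ * lam)) := by
          have := aux_tail_sum_le lam c hlam hc m hm1 hm2
          rw [hκdef]
          convert this using 3
      _ = C * Real.exp (-(κ * (lstar * (x / v p)))) := by rw [hCdef, hlam', ht]
  -- squeeze
  set β : ℝ := κ * (lstar * x) with hβdef
  have hβ : 0 < β := by positivity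
  apply squeeze_zero' (g := fun p : ℕ => C * ((p : ℝ) * Real.exp (-β * (p : ℝ) ^ δ)))
  · filter_upwards with p
    positivity
  · filter_upwards [hev, eventually_ge_atTop 1] with p hvle hp1
    have hp0 : (0:ℝ) < (p:ℝ) := by exact_mod_cast hp1
    have hpδ : (0:ℝ) < (p:ℝ) ^ δ := Real.rpow_pos_of_pos hp0 δ
    have hinv : (p:ℝ) ^ δ ≤ (v p)⁻¹ := by
      rw [← inv_inv ((p:ℝ) ^ δ)]
      apply inv_anti₀ (hv p)
      rwa [← Real.rpow_neg (le_of_lt hp0)]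
    have hexp : Real.exp (-(κ * (lstar * (x / v p)))) ≤ Real.exp (-β * (p:ℝ) ^ δ) := by
      apply Real.exp_le_exp.2
      rw [hβdef]
      have : lstar * x * ((p:ℝ) ^ δ) ≤ lstar * (x / v p) := by
        rw [div_eq_mul_inv, ← mul_assoc]
        exact mul_le_mul_of_nonneg_left hinv (by positivity)
      nlinarith
    calc (p : ℝ) * (ℙ {ω | x / (a' * v p) ≤ ((N (x / v p)) ω : ℝ)}).toReal
        ≤ (p : ℝ) * (C * Real.exp (-(κ * (lstar * (x / v p))))) :=
          mul_le_mul_of_nonneg_left (key p) (by positivity)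
      _ ≤ (p : ℝ) * (C * Real.exp (-β * (p:ℝ) ^ δ)) :=
          mul_le_mul_of_nonneg_left (mul_le_mul_of_nonneg_left hexp (le_of_lt hC))
            (by positivity)
      _ = C * ((p : ℝ) * Real.exp (-β * (p:ℝ) ^ δ)) := by ring
  · have base : Tendsto (fun y : ℝ => y ^ (δ⁻¹) * Real.exp (-β * y)) atTop (nhds 0) :=
      tendsto_rpow_mul_exp_neg_mul_atTop_nhds_zero δ⁻¹ β hβ
    have hcomp : Tendsto (fun p : ℕ => ((p:ℝ) ^ δ) ^ (δ⁻¹) * Real.exp (-β * (p:ℝ) ^ δ))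
        atTop (nhds 0) :=
      base.comp ((tendsto_rpow_atTop hδ).comp tendsto_natCast_atTop_atTop)
    have hcongr : ∀ p : ℕ, ((p:ℝ) ^ δ) ^ (δ⁻¹) * Real.exp (-β * (p:ℝ) ^ δ)
        = (p : ℝ) * Real.exp (-β * (p:ℝ) ^ δ) := by
      intro p
      congr 1
      rw [← Real.rpow_mul (Nat.cast_nonneg p), mul_inv_cancel₀ (ne_of_gt hδ), Real.rpow_one]
    have h0 : Tendsto (fun p : ℕ => (p : ℝ) * Real.exp (-β * (p:ℝ) ^ δ)) atTop (nhds 0) :=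
      hcomp.congr hcongr
    have := h0.const_mul C
    simpa using this
end

section
/- Let γ ∈ (1,2), let V be a positive random variable and (v_p)_{p≥1} positive reals with v_p → 0 such that p·P(V ≥ x/v_p) → x^{−γ} as p → ∞ for every x > 0. Let μ be a random nondecreasing right-continuous function from [0,∞) to [0,∞) with μ(0) = 0, independent of V, satisfying Assumption R1 (there is a ∈ (0,∞) with E|μ(t)/t − 1/a| → 0 as t → ∞) and Assumption R2 (p·P(v_p·μ(x/v_p)/x ≥ 1/a′) → 0 as p → ∞ for some a′ ∈ (0,a) and every x > 0). Then for every x > 0, p·P(μ(V) ≥ x/v_p) → (a·x)^{−γ} as p → ∞; in particular μ(V) is in the domain of attraction of a γ-stable distribution. -/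
open MeasureTheory ProbabilityTheory Filter
open scoped ENNReal NNReal

set_option maxHeartbeats 1000000 in
/-- Lemma `lemma:DA-mu(V)` of the paper. Under Assumptions V, R1 and R2,
`p · P(μ(V) ≥ x/v_p) → (a x)^{-γ}` for every `x > 0`. -/
theorem tail_mu_V
    {Ω : Type*} [MeasureSpace Ω] [IsProbabilityMeasure (ℙ : Measure Ω)]
    (γ : ℝ) (hγ : γ ∈ Set.Ioo (1 : ℝ) 2)
    (V : Ω → ℝ) (hVmeas : Measurable V) (hVpos : ∀ ω, 0 < V ω)
    (v : ℕ → ℝ) (hv : ∀ p, 0 < v p) (hv0 : Tendsto v atTop (nhds 0))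
    (hV : ∀ x > (0 : ℝ), Tendsto (fun p : ℕ =>
        (p : ℝ) * (ℙ {ω | x / v p ≤ V ω}).toReal) atTop (nhds (x ^ (-γ))))
    (μ : Ω → ℝ → ℝ)
    (hμmeas : ∀ t, Measurable fun ω => μ ω t)
    (hμmono : ∀ ω, Monotone (μ ω))
    (hμrc : ∀ ω t, ContinuousWithinAt (μ ω) (Set.Ici t) t)
    (hμ0 : ∀ ω, μ ω 0 = 0)
    (hμnonneg : ∀ ω t, 0 ≤ μ ω t)
    (hindep : IndepFun V μ ℙ)
    (a : ℝ) (ha : 0 < a)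
    (hR1 : Tendsto (fun t : ℝ => ∫ ω, |μ ω t / t - 1 / a|) atTop (nhds 0))
    (a' : ℝ) (ha' : a' ∈ Set.Ioo (0 : ℝ) a)
    (hR2 : ∀ x > (0 : ℝ), Tendsto (fun p : ℕ =>
        (p : ℝ) * (ℙ {ω | 1 / a' ≤ v p * μ ω (x / v p) / x}).toReal) atTop (nhds 0)) :
    ∀ x > (0 : ℝ), Tendsto (fun p : ℕ =>
        (p : ℝ) * (ℙ {ω | x / v p ≤ μ ω (V ω)}).toReal)
      atTop (nhds ((a * x) ^ (-γ))) := by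
  obtain ⟨hγ1, hγ2⟩ := hγ
  obtain ⟨ha'0, ha'a⟩ := ha'
  intro x hx
  -- `1/v p → ∞`, hence `b / v p → ∞` for every `b > 0`.
  have hvinv : Tendsto (fun p => (v p)⁻¹) atTop atTop := by
    apply tendsto_inv_nhdsGT_zero.comp
    exact tendsto_nhdsWithin_of_tendsto_nhds_of_eventually_within _ hv0
      (Eventually.of_forall fun p => hv p)
  have hT : ∀ b : ℝ, 0 < b → Tendsto (fun p => b * x / v p) atTop atTop := by
    intro b hb
    have : Tendsto (fun p => (b * x) * (v p)⁻¹) atTop atTop :=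
      hvinv.const_mul_atTop (by positivity)
    simpa [div_eq_mul_inv] using this
  -- Lemma L : a polynomial lower bound for `v p`.
  set γ'' : ℝ := (1 + γ) / 2 with hγ''def
  have hγ''1 : 1 < γ'' := by rw [hγ''def]; linarith
  have hγ''γ : γ'' < γ := by rw [hγ''def]; linarith
  have hγ''0 : (0:ℝ) < γ'' := by linarith
  have hL : ∃ c > (0:ℝ), ∃ N : ℕ, 0 < N ∧ ∀ p : ℕ, N ≤ p → c * (p:ℝ) ^ (-(1/γ'')) ≤ v p := by
    obtain ⟨s, hs1, hs2, hs3⟩ : ∃ s : ℝ, 1 ≤ s ∧ 2 ≤ s ^ γ'' ∧ 12 ≤ s ^ (γ - γ'') := by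
      have e1 : ∀ᶠ s : ℝ in atTop, 1 ≤ s := eventually_ge_atTop 1
      have e2 : ∀ᶠ s : ℝ in atTop, 2 ≤ s ^ γ'' :=
        (tendsto_rpow_atTop hγ''0).eventually_ge_atTop 2
      have e3 : ∀ᶠ s : ℝ in atTop, 12 ≤ s ^ (γ - γ'') :=
        (tendsto_rpow_atTop (by linarith)).eventually_ge_atTop 12
      obtain ⟨s, h1, h2, h3⟩ := (e1.and (e2.and e3)).exists
      exact ⟨s, h1, h2, h3⟩
    have hs0 : (0:ℝ) < s := lt_of_lt_of_le one_pos hs1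
    have h1 := hV 1 one_pos
    rw [Real.one_rpow] at h1
    have h2 := hV s hs0
    have e1 : ∀ᶠ p : ℕ in atTop, 1/2 ≤ (p:ℝ) * (ℙ {ω | 1 / v p ≤ V ω}).toReal :=
      h1.eventually (eventually_ge_nhds (by norm_num))
    have e2 : ∀ᶠ p : ℕ in atTop, (p:ℝ) * (ℙ {ω | s / v p ≤ V ω}).toReal ≤ 2 * s ^ (-γ) :=
      h2.eventually (eventually_le_nhds
        (by nlinarith [Real.rpow_pos_of_pos hs0 (-γ)]))
    obtain ⟨N₀, hN₀⟩ := eventually_atTop.1 (e1.and e2)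
    set N : ℕ := max N₀ 1 with hNdef
    have hN1 : 1 ≤ N := le_max_right _ _
    have hGmono : ∀ y z : ℝ, y ≤ z →
        (ℙ {ω | z ≤ V ω}).toReal ≤ (ℙ {ω | y ≤ V ω}).toReal := by
      intro y z hyz
      exact ENNReal.toReal_mono (measure_ne_top _ _)
        (measure_mono (fun ω hω => le_trans hyz hω))
    have step : ∀ p q : ℕ, N ≤ p → N ≤ q → v q * s ≤ v p → (p:ℝ) * s ^ γ ≤ 4 * q := by
      intro p q hp hq hvq
      have hA := (hN₀ q (le_trans (le_max_left _ _) hq)).1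
      have hB := (hN₀ p (le_trans (le_max_left _ _) hp)).2
      have hmono : (ℙ {ω | 1 / v q ≤ V ω}).toReal ≤ (ℙ {ω | s / v p ≤ V ω}).toReal := by
        apply hGmono
        rw [div_le_div_iff₀ (hv p) (hv q)]
        linarith [hvq, mul_comm (v q) s]
      set r : ℝ := (ℙ {ω | 1 / v q ≤ V ω}).toReal with hrdef
      have hq0 : (0:ℝ) < q := by
        have : (1:ℕ) ≤ q := le_trans hN1 hq
        exact_mod_cast this
      have hr0 : 0 < r := by nlinarith
      have hp0 : (0:ℝ) ≤ p := Nat.cast_nonneg p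
      have hpr : (p:ℝ) * r ≤ 2 * s ^ (-γ) := by
        calc (p:ℝ) * r ≤ (p:ℝ) * (ℙ {ω | s / v p ≤ V ω}).toReal :=
              mul_le_mul_of_nonneg_left hmono hp0
          _ ≤ 2 * s ^ (-γ) := hB
      have hss : s ^ γ * s ^ (-γ) = 1 := by
        rw [← Real.rpow_add hs0]; simp
      have hsγ : 0 < s ^ γ := Real.rpow_pos_of_pos hs0 γ
      have h5 : ((p:ℝ) * r) * s ^ γ ≤ 2 * (s ^ (-γ) * s ^ γ) := by
        nlinarith
      have h6 : ((p:ℝ) * s ^ γ) * r ≤ 2 := by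
        rw [mul_comm (s ^ (-γ)) (s ^ γ)] at h5
        nlinarith
      nlinarith
    set B : ℕ := ⌈s ^ γ''⌉₊ with hBdef
    have hsB : s ^ γ'' ≤ (B:ℝ) := Nat.le_ceil _
    have hB2 : 2 ≤ B := by
      have : (2:ℝ) ≤ (B:ℝ) := le_trans hs2 hsB
      exact_mod_cast this
    have hBs : 4 * (B:ℝ) < s ^ γ := by
      have hBlt : (B:ℝ) < s ^ γ'' + 1 :=
        Nat.ceil_lt_add_one (Real.rpow_nonneg hs0.le _)
      have hsplit : s ^ γ = s ^ γ'' * s ^ (γ - γ'') := by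
        rw [← Real.rpow_add hs0]; ring_nf
      nlinarith
    have step2 : ∀ p q : ℕ, N ≤ p → N ≤ q → (q:ℝ) ≤ (B:ℝ) * p → v p * s⁻¹ ≤ v q := by
      intro p q hp hq hqB
      by_contra hcon
      push_neg at hcon
      have h7 : v q * s ≤ v p := by
        have := mul_lt_mul_of_pos_right hcon hs0
        rw [mul_assoc, inv_mul_cancel₀ (ne_of_gt hs0), mul_one] at this
        linarith
      have h8 := step p q hp hq h7
      have hp0 : (0:ℝ) < p := by
        have : (1:ℕ) ≤ p := le_trans hN1 hp
        exact_mod_cast this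
      nlinarith
    -- now iterate
    have hB0 : 0 < B := by omega
    have hNB : ∀ k : ℕ, N ≤ N * B ^ k :=
      fun k => Nat.le_mul_of_pos_right N (pow_pos hB0 k)
    have hC : ∀ k : ℕ, v N * (s⁻¹) ^ k ≤ v (N * B ^ k) := by
      intro k
      induction k with
      | zero => simp
      | succ k ih =>
        have h9 : v (N * B ^ k) * s⁻¹ ≤ v (N * B ^ (k+1)) := by
          apply step2 _ _ (hNB k) (hNB (k+1))
          exact le_of_eq (by push_cast [pow_succ]; ring)
        calc v N * s⁻¹ ^ (k+1) = (v N * s⁻¹ ^ k) * s⁻¹ := by ring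
          _ ≤ v (N * B ^ k) * s⁻¹ :=
              mul_le_mul_of_nonneg_right ih (inv_nonneg.2 hs0.le)
          _ ≤ v (N * B ^ (k+1)) := h9
    refine ⟨v N * s⁻¹, mul_pos (hv N) (inv_pos.2 hs0), N, by omega, ?_⟩
    intro q hq
    have hex : ∃ k, q < N * B ^ (k + 1) := by
      refine ⟨q, ?_⟩
      calc q < 2 ^ q := Nat.lt_two_pow_self (n := q)
        _ ≤ B ^ q := Nat.pow_le_pow_left hB2 q
        _ ≤ B ^ (q+1) := Nat.pow_le_pow_right (by omega) (by omega)
        _ ≤ N * B ^ (q+1) := Nat.le_mul_of_pos_left _ (by omega)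
    set k : ℕ := Nat.find hex with hkdef
    have hk : q < N * B ^ (k + 1) := Nat.find_spec hex
    have hNBk : N * B ^ k ≤ q := by
      rcases Nat.eq_zero_or_pos k with hk0 | hk0
      · simpa [hk0] using hq
      · have hmin : ¬ q < N * B ^ (k - 1 + 1) := Nat.find_min hex (show k - 1 < k by omega)
        have hkk : k - 1 + 1 = k := by omega
        rw [hkk] at hmin
        omega
    have hstep := step2 (N * B ^ k) q (hNB k) hq
      (by
        have hk' : (q:ℝ) < (N:ℝ) * ((B:ℝ) ^ (k+1)) := by exact_mod_cast hk
        have heq : (N:ℝ) * ((B:ℝ) ^ (k+1)) = (B:ℝ) * ((N:ℝ) * (B:ℝ)^k) := by ring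
        push_cast
        linarith)
    have hfin : v N * (s⁻¹) ^ (k+1) ≤ v q := by
      calc v N * (s⁻¹) ^ (k+1) = (v N * (s⁻¹) ^ k) * s⁻¹ := by ring
        _ ≤ v (N * B ^ k) * s⁻¹ := mul_le_mul_of_nonneg_right (hC k) (inv_nonneg.2 hs0.le)
        _ ≤ v q := hstep
    -- compare `(s⁻¹)^k` with `q ^ (-(1/γ''))`
    have hq0 : (0:ℝ) < q := by
      have : (1:ℕ) ≤ q := le_trans hN1 hq
      exact_mod_cast this
    have hBk_le : ((B:ℝ)) ^ k ≤ (q:ℝ) := by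
      have h11 : B ^ k ≤ q := le_trans (Nat.le_mul_of_pos_left _ (by omega)) hNBk
      exact_mod_cast h11
    have hsk : s ^ k ≤ (q:ℝ) ^ (1/γ'') := by
      have hsB' : s ≤ (B:ℝ) ^ (1/γ'') := by
        have h10 : (s ^ γ'') ^ (1/γ'') ≤ (B:ℝ) ^ (1/γ'') :=
          Real.rpow_le_rpow (Real.rpow_nonneg hs0.le _) hsB (by positivity)
        rwa [← Real.rpow_mul hs0.le, mul_one_div, div_self (ne_of_gt hγ''0),
          Real.rpow_one] at h10
      calc s ^ k ≤ ((B:ℝ) ^ (1/γ'')) ^ k := pow_le_pow_left₀ hs0.le hsB' k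
        _ = ((B:ℝ) ^ k) ^ (1/γ'') := by
            rw [← Real.rpow_natCast ((B:ℝ) ^ (1/γ'')) k, ← Real.rpow_mul (Nat.cast_nonneg B),
              mul_comm, Real.rpow_mul (Nat.cast_nonneg B), Real.rpow_natCast]
        _ ≤ (q:ℝ) ^ (1/γ'') := Real.rpow_le_rpow (by positivity) hBk_le (by positivity)
    have hqk : (q:ℝ) ^ (-(1/γ'')) ≤ (s⁻¹) ^ k := by
      rw [Real.rpow_neg (le_of_lt hq0), inv_pow]
      exact inv_anti₀ (pow_pos hs0 k) hsk
    calc v N * s⁻¹ * (q:ℝ) ^ (-(1/γ'')) ≤ v N * s⁻¹ * (s⁻¹) ^ k :=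
          mul_le_mul_of_nonneg_left hqk (le_of_lt (mul_pos (hv N) (inv_pos.2 hs0)))
      _ = v N * (s⁻¹) ^ (k+1) := by ring
      _ ≤ v q := hfin
  -- Integrability of `μ · t` for every `t`.
  obtain ⟨c, hc, N_L, hN_L0, hLc⟩ := hL
  have hInt : ∀ t : ℝ, Integrable (fun ω => μ ω t) := by
    intro t
    rcases le_or_gt t 0 with ht | ht
    · have hz : (fun ω => μ ω t) = (fun _ => (0:ℝ)) := funext fun ω =>
        le_antisymm (by simpa [hμ0 ω] using hμmono ω ht) (hμnonneg ω t)
      rw [hz]; exact integrable_const 0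
    -- main case `t > 0`
    obtain ⟨N₂, hN₂⟩ := eventually_atTop.1
      ((hR2 1 one_pos).eventually (eventually_le_nhds one_pos))
    set pf : ℝ → ℕ := fun u => ⌊(c * a' * u) ^ γ''⌋₊ with hpfdef
    have hca' : 0 < c * a' := mul_pos hc ha'0
    have hpT : Tendsto pf atTop atTop := by
      apply tendsto_nat_floor_atTop.comp
      apply (tendsto_rpow_atTop hγ''0).comp
      exact tendsto_id.const_mul_atTop hca'
    have hE1 : ∀ᶠ u : ℝ in atTop, max N₂ N_L ≤ pf u ∧ 1 ≤ pf u :=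
      (hpT.eventually_ge_atTop _).and (hpT.eventually_ge_atTop _)
    have hE2 : ∀ᶠ u : ℝ in atTop, v (pf u) ≤ 1 / t :=
      (hv0.comp hpT).eventually (eventually_le_nhds (by positivity))
    have hE3 : ∀ᶠ u : ℝ in atTop, (0:ℝ) < u := eventually_gt_atTop 0
    have hE4 : ∀ᶠ u : ℝ in atTop, (2:ℝ) ≤ (c * a' * u) ^ γ'' :=
      ((tendsto_rpow_atTop hγ''0).comp (tendsto_id.const_mul_atTop hca')).eventually_ge_atTop 2
    obtain ⟨u₁, hu₁⟩ := eventually_atTop.1 ((hE1.and (hE2.and (hE3.and hE4))).and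
      (eventually_ge_atTop 1))
    have hu₁1 : (1:ℝ) ≤ u₁ := (hu₁ u₁ le_rfl).2
    have hu₁0 : (0:ℝ) < u₁ := lt_of_lt_of_le one_pos hu₁1
    set K : ℝ := 2 * ((c * a') ^ γ'')⁻¹ with hKdef
    have hK0 : 0 < K := by positivity
    -- the tail bound
    have tail : ∀ u : ℝ, u₁ ≤ u →
        ℙ {ω' | u < μ ω' t} ≤ ENNReal.ofReal (K * u ^ (-γ'')) := by
      intro u hu
      obtain ⟨⟨⟨hpN, hp1⟩, hvpf, hu0, h2le⟩, -⟩ := hu₁ u hu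
      set p : ℕ := pf u with hpdef
      have hp0 : (0:ℝ) < p := by exact_mod_cast hp1
      have hple : (p:ℝ) ≤ (c * a' * u) ^ γ'' := by
        have h13 := Nat.floor_le
          (Real.rpow_nonneg (show (0:ℝ) ≤ c * a' * u by positivity) γ'')
        exact_mod_cast h13
      have hpge : (c * a' * u) ^ γ'' / 2 ≤ (p:ℝ) := by
        have := Nat.lt_floor_add_one ((c * a' * u) ^ γ'')
        have h1p : (c * a' * u) ^ γ'' - 1 ≤ (p:ℝ) := by
          push_cast at this ⊢
          linarith
        linarith
      -- from Lemma L :  `1/(a' * v p) ≤ u`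
      have hvp : 1 ≤ a' * v p * u := by
        have hLp : c * (p:ℝ) ^ (-(1/γ'')) ≤ v p := hLc p (le_trans (le_max_right _ _) hpN)
        have hcau : (0:ℝ) < c * a' * u := by positivity
        have hup : (p:ℝ) ^ (1/γ'') ≤ c * a' * u := by
          have h12 : ((p:ℝ)) ^ (1/γ'') ≤ ((c * a' * u) ^ γ'') ^ (1/γ'') :=
            Real.rpow_le_rpow (Nat.cast_nonneg p) hple (by positivity)
          rwa [← Real.rpow_mul hcau.le, mul_one_div, div_self (ne_of_gt hγ''0),
            Real.rpow_one] at h12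
        have hppos : (0:ℝ) < (p:ℝ) ^ (1/γ'') := Real.rpow_pos_of_pos hp0 _
        have hinv : (c * a' * u)⁻¹ ≤ ((p:ℝ) ^ (1/γ''))⁻¹ := inv_anti₀ hppos hup
        have hneg : (p:ℝ) ^ (-(1/γ'')) = ((p:ℝ) ^ (1/γ''))⁻¹ := by
          rw [Real.rpow_neg (Nat.cast_nonneg p)]
        have hvpge : c * (c * a' * u)⁻¹ ≤ v p := by
          refine le_trans ?_ hLp
          rw [hneg]
          exact mul_le_mul_of_nonneg_left hinv hc.le
        have hsimp : c * (c * a' * u)⁻¹ = (a' * u)⁻¹ := by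
          rw [show c * a' * u = c * (a' * u) by ring, mul_inv, ← mul_assoc,
            mul_inv_cancel₀ (ne_of_gt hc), one_mul]
        rw [hsimp] at hvpge
        have : (a' * u)⁻¹ * (a' * u) ≤ v p * (a' * u) :=
          mul_le_mul_of_nonneg_right hvpge (by positivity)
        rw [inv_mul_cancel₀ (by positivity)] at this
        linarith [this]
      -- event inclusion
      have hincl : {ω' | u < μ ω' t} ⊆ {ω' | 1 / a' ≤ v p * μ ω' (1 / v p) / 1} := by
        intro ω' hω'
        simp only [Set.mem_setOf_eq] at hω' ⊢
        have htle : t ≤ 1 / v p := by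
          rw [le_div_iff₀ (hv p)]
          calc t * v p ≤ t * (1/t) := mul_le_mul_of_nonneg_left hvpf ht.le
            _ = 1 := by field_simp
        have hmu : u < μ ω' (1 / v p) := lt_of_lt_of_le hω' (hμmono ω' htle)
        have : 1 / a' ≤ v p * u := by
          rw [div_le_iff₀ ha'0]
          calc 1 ≤ a' * v p * u := hvp
            _ = v p * u * a' := by ring
        rw [div_one]
        calc 1/a' ≤ v p * u := this
          _ ≤ v p * μ ω' (1 / v p) := mul_le_mul_of_nonneg_left hmu.le (hv p).le
      have hmeasle : ℙ {ω' | u < μ ω' t} ≤ ENNReal.ofReal ((p:ℝ))⁻¹ := by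
        refine le_trans (measure_mono hincl) ?_
        rw [ENNReal.le_ofReal_iff_toReal_le (measure_ne_top _ _) (by positivity)]
        have hb := hN₂ p (le_trans (le_max_left _ _) hpN)
        rw [← one_div, le_div_iff₀ hp0]
        linarith [hb]
      refine le_trans hmeasle (ENNReal.ofReal_le_ofReal ?_)
      -- `p⁻¹ ≤ K u^{-γ''}`
      have hKu : K * u ^ (-γ'') = 2 * ((c * a' * u) ^ γ'')⁻¹ := by
        rw [hKdef, Real.rpow_neg hu0.le, Real.mul_rpow (by positivity) hu0.le,
          mul_inv]
        ring
      rw [hKu]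
      have h2p : (c * a' * u) ^ γ'' ≤ 2 * p := by linarith
      have hcp : (0:ℝ) < (c * a' * u) ^ γ'' := Real.rpow_pos_of_pos (by positivity) _
      rw [← one_div, show (2:ℝ) * ((c * a' * u) ^ γ'')⁻¹ = 2 / ((c * a' * u) ^ γ'') by
        rw [div_eq_mul_inv], div_le_div_iff₀ hp0 hcp]
      linarith
    -- assemble integrability from the tail bound
    refine ⟨(hμmeas t).aestronglyMeasurable, ?_⟩
    rw [hasFiniteIntegral_iff_ofReal (ae_of_all _ (fun ω => hμnonneg ω t))]
    rw [lintegral_eq_lintegral_meas_lt ℙ (ae_of_all _ (fun ω => hμnonneg ω t))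
      (hμmeas t).aemeasurable]
    have hbound : ∫⁻ u in Set.Ioi (0:ℝ), ℙ {ω' | u < μ ω' t}
        ≤ ∫⁻ u in Set.Ioi (0:ℝ), ((Set.Ioc (0:ℝ) u₁).indicator (fun _ => (1:ℝ≥0∞)) u
            + (Set.Ioi u₁).indicator (fun w => ENNReal.ofReal (K * w ^ (-γ''))) u) := by
      apply lintegral_mono_ae
      rw [ae_restrict_iff' measurableSet_Ioi]
      apply ae_of_all
      intro u hu
      rcases le_or_gt u u₁ with h | h
      · have h1 : (Set.Ioc (0:ℝ) u₁).indicator (fun _ => (1:ℝ≥0∞)) u = 1 :=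
          Set.indicator_of_mem (Set.mem_Ioc.2 ⟨Set.mem_Ioi.1 hu, h⟩) _
        rw [h1]
        exact le_add_right prob_le_one
      · have h1 : (Set.Ioi u₁).indicator (fun w => ENNReal.ofReal (K * w ^ (-γ''))) u
            = ENNReal.ofReal (K * u ^ (-γ'')) := Set.indicator_of_mem h _
        rw [h1]
        exact le_add_left (tail u h.le)
    refine lt_of_le_of_lt hbound ?_
    rw [lintegral_add_left (measurable_const.indicator measurableSet_Ioc)]
    have piece1 : ∫⁻ u in Set.Ioi (0:ℝ), (Set.Ioc (0:ℝ) u₁).indicator (fun _ => (1:ℝ≥0∞)) u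
        < ⊤ := by
      rw [lintegral_indicator measurableSet_Ioc]
      calc ∫⁻ _ in Set.Ioc (0:ℝ) u₁, (1:ℝ≥0∞) ∂(volume.restrict (Set.Ioi 0))
          = (volume.restrict (Set.Ioi 0)) (Set.Ioc (0:ℝ) u₁) := setLIntegral_one _
        _ ≤ volume (Set.Ioc (0:ℝ) u₁) := Measure.restrict_le_self _
        _ = ENNReal.ofReal (u₁ - 0) := Real.volume_Ioc
        _ < ⊤ := ENNReal.ofReal_lt_top
    have piece2 : ∫⁻ u in Set.Ioi (0:ℝ),
        (Set.Ioi u₁).indicator (fun w => ENNReal.ofReal (K * w ^ (-γ''))) u < ⊤ := by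
      have hle : ∫⁻ u in Set.Ioi (0:ℝ),
          (Set.Ioi u₁).indicator (fun w => ENNReal.ofReal (K * w ^ (-γ''))) u
          ≤ ∫⁻ u, (Set.Ioi u₁).indicator (fun w => ENNReal.ofReal (K * w ^ (-γ''))) u :=
        lintegral_mono' Measure.restrict_le_self le_rfl
      refine lt_of_le_of_lt hle ?_
      rw [lintegral_indicator measurableSet_Ioi]
      have hig : IntegrableOn (fun w : ℝ => K * w ^ (-γ'')) (Set.Ioi u₁) :=
        (integrableOn_Ioi_rpow_of_lt (by linarith) hu₁0).const_mul K
      refine lt_of_le_of_lt (lintegral_mono (fun w => Real.ofReal_le_enorm _)) ?_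
      exact hig.2
    exact ENNReal.add_lt_top.2 ⟨piece1, piece2⟩
  -- Markov consequence of R1.
  have hMk : ∀ δ : ℝ, 0 < δ →
      Tendsto (fun T : ℝ => (ℙ {ω | δ ≤ |μ ω T / T - 1/a|}).toReal) atTop (nhds 0) := by
    intro δ hδ
    have key : ∀ T : ℝ, (ℙ {ω | δ ≤ |μ ω T / T - 1/a|}).toReal ≤ (∫ ω, |μ ω T / T - 1/a|) / δ := by
      intro T
      have hint : Integrable (fun ω => |μ ω T / T - 1/a|) :=
        (((hInt T).div_const T).sub (integrable_const _)).abs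
      have h3 := mul_meas_ge_le_integral_of_nonneg
        (Eventually.of_forall fun ω => abs_nonneg (μ ω T / T - 1/a)) hint δ
      rw [le_div_iff₀ hδ]
      rw [measureReal_def] at h3
      linarith [h3]
    exact squeeze_zero (fun T => ENNReal.toReal_nonneg) key (by simpa using hR1.div_const δ)
  -- independence of events
  have hprod : ∀ (s r t : ℝ),
      ℙ ({ω | s ≤ V ω} ∩ {ω | r ≤ μ ω t}) = ℙ {ω | s ≤ V ω} * ℙ {ω | r ≤ μ ω t} := by
    intro s r t
    have h1 : IndepFun V (fun ω => μ ω t) ℙ :=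
      hindep.comp measurable_id (measurable_pi_apply t)
    have h2 := h1.measure_inter_preimage_eq_mul (s := Set.Ici s) (t := Set.Ici r)
      measurableSet_Ici measurableSet_Ici
    simpa [Set.preimage, Set.mem_Ici] using h2
  -- toReal monotonicity helper
  have hPmono : ∀ s₁ s₂ : Set Ω, s₁ ⊆ s₂ → (ℙ s₁).toReal ≤ (ℙ s₂).toReal :=
    fun s₁ s₂ h => ENNReal.toReal_mono (measure_ne_top _ _) (measure_mono h)
  rw [tendsto_order]
  constructor
  · -- lower bound
    intro b hb
    have hcont : Tendsto (fun η : ℝ => ((a + η) * x) ^ (-γ)) (nhds 0)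
        (nhds ((a * x) ^ (-γ))) := by
      have hbase : Tendsto (fun η : ℝ => (a + η) * x) (nhds 0) (nhds (a * x)) := by
        have hcb : Continuous fun η : ℝ => (a + η) * x := by fun_prop
        simpa using hcb.tendsto 0
      have hrp : ContinuousAt (fun y : ℝ => y ^ (-γ)) (a * x) :=
        Real.continuousAt_rpow_const _ _ (Or.inl (mul_pos ha hx).ne')
      exact hrp.tendsto.comp hbase
    obtain ⟨η, hηgt, hη0⟩ :=
      (((hcont.mono_left (nhdsWithin_le_nhds :
            nhdsWithin (0:ℝ) (Set.Ioi 0) ≤ nhds 0)).eventually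
          (eventually_gt_nhds hb)).and self_mem_nhdsWithin).exists
    replace hη0 : (0:ℝ) < η := hη0
    have hb1 : (0:ℝ) < a + η := by linarith
    have hδ' : (0:ℝ) < 1 / a - 1 / (a + η) := by
      have : 1 / (a + η) < 1 / a := one_div_lt_one_div_of_lt ha (by linarith)
      linarith
    set δ' : ℝ := 1 / a - 1 / (a + η) with hδ'def
    have h2 : Tendsto (fun p : ℕ =>
        (ℙ {ω | δ' ≤ |μ ω ((a + η) * x / v p) / ((a + η) * x / v p) - 1/a|}).toReal)
        atTop (nhds 0) := (hMk δ' hδ').comp (hT (a + η) hb1)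
    have hgl : Tendsto (fun p : ℕ =>
        ((p : ℝ) * (ℙ {ω | (a + η) * x / v p ≤ V ω}).toReal) *
        (1 - (ℙ {ω | δ' ≤ |μ ω ((a + η) * x / v p) / ((a + η) * x / v p) - 1/a|}).toReal))
        atTop (nhds (((a + η) * x) ^ (-γ))) := by
      have := (hV ((a + η) * x) (mul_pos hb1 hx)).mul ((tendsto_const_nhds (x := (1:ℝ))).sub h2)
      simpa using this
    filter_upwards [hgl.eventually (eventually_gt_nhds hηgt)] with p hp
    refine lt_of_lt_of_le hp ?_
    -- pointwise bound
    set T : ℝ := (a + η) * x / v p with hTdef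
    have hT0 : 0 < T := div_pos (mul_pos hb1 hx) (hv p)
    have hTx : T / (a + η) = x / v p := by
      rw [hTdef]
      field_simp
    have claim1 : {ω | T ≤ V ω} ∩ {ω | x / v p ≤ μ ω T} ⊆ {ω | x / v p ≤ μ ω (V ω)} := by
      rintro ω ⟨h1, h2'⟩
      exact le_trans h2' (hμmono ω h1)
    have claim3 : (1:ℝ) ≤ (ℙ {ω | x / v p ≤ μ ω T}).toReal +
        (ℙ {ω | δ' ≤ |μ ω T / T - 1/a|}).toReal := by
      have huniv : {ω | x / v p ≤ μ ω T} ∪ {ω | δ' ≤ |μ ω T / T - 1/a|} = Set.univ := by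
        rw [Set.eq_univ_iff_forall]
        intro ω
        rcases le_or_gt (x / v p) (μ ω T) with h1 | h1
        · exact Or.inl h1
        · refine Or.inr ?_
          have hlt : μ ω T / T < 1 / (a + η) := by
            have h6 : μ ω T / T < (x / v p) / T := (div_lt_div_iff_of_pos_right hT0).2 h1
            have h7 : (x / v p) / T = 1 / (a + η) := by
              rw [hTdef]
              field_simp
              exact div_self (hv p).ne'
            rwa [h7] at h6
          have : δ' ≤ -(μ ω T / T - 1/a) := by
            rw [hδ'def]; linarith
          exact le_trans this (neg_le_abs _)
      have h4 : (1:ℝ≥0∞) ≤ ℙ {ω | x / v p ≤ μ ω T} + ℙ {ω | δ' ≤ |μ ω T / T - 1/a|} := by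
        calc (1:ℝ≥0∞) = ℙ (Set.univ : Set Ω) := (measure_univ).symm
          _ = ℙ ({ω | x / v p ≤ μ ω T} ∪ {ω | δ' ≤ |μ ω T / T - 1/a|}) := by rw [huniv]
          _ ≤ _ := measure_union_le _ _
      have h5 := ENNReal.toReal_mono (by
          exact ENNReal.add_ne_top.2 ⟨measure_ne_top _ _, measure_ne_top _ _⟩) h4
      rwa [ENNReal.toReal_one, ENNReal.toReal_add (measure_ne_top _ _) (measure_ne_top _ _)]
        at h5
    have hnn : (0:ℝ) ≤ (p:ℝ) * (ℙ {ω | T ≤ V ω}).toReal := by positivity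
    calc ((p:ℝ) * (ℙ {ω | T ≤ V ω}).toReal) *
          (1 - (ℙ {ω | δ' ≤ |μ ω T / T - 1/a|}).toReal)
        ≤ ((p:ℝ) * (ℙ {ω | T ≤ V ω}).toReal) * (ℙ {ω | x / v p ≤ μ ω T}).toReal :=
          mul_le_mul_of_nonneg_left (by linarith) hnn
      _ = (p:ℝ) * ((ℙ {ω | T ≤ V ω}).toReal * (ℙ {ω | x / v p ≤ μ ω T}).toReal) := by ring
      _ = (p:ℝ) * (ℙ ({ω | T ≤ V ω} ∩ {ω | x / v p ≤ μ ω T})).toReal := by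
          rw [hprod T (x / v p) T, ENNReal.toReal_mul]
      _ ≤ (p:ℝ) * (ℙ {ω | x / v p ≤ μ ω (V ω)}).toReal :=
          mul_le_mul_of_nonneg_left (hPmono _ _ claim1) (Nat.cast_nonneg p)
  · -- upper bound
    intro b hb
    have hcont : Tendsto (fun η : ℝ => ((a - η) * x) ^ (-γ)) (nhds 0)
        (nhds ((a * x) ^ (-γ))) := by
      have hbase : Tendsto (fun η : ℝ => (a - η) * x) (nhds 0) (nhds (a * x)) := by
        have hcb : Continuous fun η : ℝ => (a - η) * x := by fun_prop
        simpa using hcb.tendsto 0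
      have hrp : ContinuousAt (fun y : ℝ => y ^ (-γ)) (a * x) :=
        Real.continuousAt_rpow_const _ _ (Or.inl (mul_pos ha hx).ne')
      exact hrp.tendsto.comp hbase
    obtain ⟨η, hηlt, hη0⟩ :=
      (((hcont.mono_left nhdsWithin_le_nhds).eventually (eventually_lt_nhds hb)).and
        (Ioo_mem_nhdsGT_of_mem ⟨le_refl (0:ℝ), ha⟩)).exists
    obtain ⟨hη0', hηa⟩ := hη0
    have haη : (0:ℝ) < a - η := by linarith
    have hδ2 : (0:ℝ) < 1 / (a - η) - 1 / a := by
      have : 1 / a < 1 / (a - η) := one_div_lt_one_div_of_lt haη (by linarith)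
      linarith
    set δ2 : ℝ := 1 / (a - η) - 1 / a with hδ2def
    have h2 : Tendsto (fun p : ℕ =>
        (ℙ {ω | δ2 ≤ |μ ω ((a - η) * x / v p) / ((a - η) * x / v p) - 1/a|}).toReal)
        atTop (nhds 0) := (hMk δ2 hδ2).comp (hT (a - η) haη)
    have hhl : Tendsto (fun p : ℕ =>
        ((p:ℝ) * (ℙ {ω | 1 / a' ≤ v p * μ ω (a' * x / v p) / (a' * x)}).toReal)
        + (((p:ℝ) * (ℙ {ω | a' * x / v p ≤ V ω}).toReal) *
            (ℙ {ω | δ2 ≤ |μ ω ((a - η) * x / v p) / ((a - η) * x / v p) - 1/a|}).toReal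
          + (p:ℝ) * (ℙ {ω | (a - η) * x / v p ≤ V ω}).toReal))
        atTop (nhds (((a - η) * x) ^ (-γ))) := by
      have l1 := hR2 (a' * x) (mul_pos ha'0 hx)
      have l2 := (hV (a' * x) (mul_pos ha'0 hx)).mul h2
      have l3 := hV ((a - η) * x) (mul_pos haη hx)
      have := l1.add (l2.add l3)
      simpa using this
    filter_upwards [hhl.eventually (eventually_lt_nhds hηlt)] with p hp
    refine lt_of_le_of_lt ?_ hp
    -- pointwise bound
    set T : ℝ := (a - η) * x / v p with hTdef
    have hT0 : 0 < T := div_pos (mul_pos haη hx) (hv p)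
    have hincl : {ω | x / v p ≤ μ ω (V ω)} ⊆
        {ω | 1 / a' ≤ v p * μ ω (a' * x / v p) / (a' * x)}
        ∪ (({ω | a' * x / v p ≤ V ω} ∩ {ω | x / v p ≤ μ ω T})
            ∪ {ω | T ≤ V ω}) := by
      intro ω hω
      simp only [Set.mem_setOf_eq] at hω
      rcases le_or_gt T (V ω) with h3 | h3
      · exact Or.inr (Or.inr h3)
      rcases le_or_gt (a' * x / v p) (V ω) with h4 | h4
      · refine Or.inr (Or.inl ⟨h4, ?_⟩)
        exact le_trans hω (hμmono ω h3.le)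
      · refine Or.inl ?_
        have h5 : x / v p ≤ μ ω (a' * x / v p) := le_trans hω (hμmono ω h4.le)
        have h6 : v p * (x / v p) ≤ v p * μ ω (a' * x / v p) :=
          mul_le_mul_of_nonneg_left h5 (hv p).le
        rw [Set.mem_setOf_eq, le_div_iff₀ (by positivity)]
        calc 1 / a' * (a' * x) = x := by field_simp
          _ = v p * (x / v p) := by
              symm; rw [mul_comm]; exact div_mul_cancel₀ _ (hv p).ne'
          _ ≤ v p * μ ω (a' * x / v p) := h6
    have hμM : (ℙ {ω | x / v p ≤ μ ω T}).toReal ≤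
        (ℙ {ω | δ2 ≤ |μ ω T / T - 1/a|}).toReal := by
      apply hPmono
      intro ω hω
      rw [Set.mem_setOf_eq] at hω ⊢
      have hge : 1 / (a - η) ≤ μ ω T / T := by
        have h6 : (x / v p) / T ≤ μ ω T / T := (div_le_div_iff_of_pos_right hT0).2 hω
        have h7 : (x / v p) / T = 1 / (a - η) := by
          rw [hTdef]
          field_simp
          exact div_self (hv p).ne'
        rwa [h7] at h6
      have : δ2 ≤ μ ω T / T - 1/a := by rw [hδ2def]; linarith
      exact le_trans this (le_abs_self _)
    -- combine
    have hsplit : (ℙ {ω | x / v p ≤ μ ω (V ω)}).toReal ≤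
        (ℙ {ω | 1 / a' ≤ v p * μ ω (a' * x / v p) / (a' * x)}).toReal
        + ((ℙ ({ω | a' * x / v p ≤ V ω} ∩ {ω | x / v p ≤ μ ω T})).toReal
          + (ℙ {ω | T ≤ V ω}).toReal) := by
      refine le_trans (hPmono _ _ hincl) ?_
      refine le_trans (ENNReal.toReal_mono ?_ (measure_union_le _ _)) ?_
      · exact ENNReal.add_ne_top.2 ⟨measure_ne_top _ _, measure_ne_top _ _⟩
      rw [ENNReal.toReal_add (measure_ne_top _ _) (measure_ne_top _ _)]
      refine add_le_add_right ?_ _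
      refine le_trans (ENNReal.toReal_mono ?_ (measure_union_le _ _)) ?_
      · exact ENNReal.add_ne_top.2 ⟨measure_ne_top _ _, measure_ne_top _ _⟩
      rw [ENNReal.toReal_add (measure_ne_top _ _) (measure_ne_top _ _)]
    calc (p:ℝ) * (ℙ {ω | x / v p ≤ μ ω (V ω)}).toReal
        ≤ (p:ℝ) * ((ℙ {ω | 1 / a' ≤ v p * μ ω (a' * x / v p) / (a' * x)}).toReal
          + ((ℙ ({ω | a' * x / v p ≤ V ω} ∩ {ω | x / v p ≤ μ ω T})).toReal
            + (ℙ {ω | T ≤ V ω}).toReal)) :=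
          mul_le_mul_of_nonneg_left hsplit (Nat.cast_nonneg p)
      _ = (p:ℝ) * (ℙ {ω | 1 / a' ≤ v p * μ ω (a' * x / v p) / (a' * x)}).toReal
          + (((p:ℝ) * (ℙ {ω | a' * x / v p ≤ V ω}).toReal) *
              (ℙ {ω | x / v p ≤ μ ω T}).toReal
            + (p:ℝ) * (ℙ {ω | T ≤ V ω}).toReal) := by
          rw [hprod (a' * x / v p) (x / v p) T, ENNReal.toReal_mul]
          ring
      _ ≤ (p:ℝ) * (ℙ {ω | 1 / a' ≤ v p * μ ω (a' * x / v p) / (a' * x)}).toReal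
          + (((p:ℝ) * (ℙ {ω | a' * x / v p ≤ V ω}).toReal) *
              (ℙ {ω | δ2 ≤ |μ ω T / T - 1/a|}).toReal
            + (p:ℝ) * (ℙ {ω | T ≤ V ω}).toReal) := by
          refine add_le_add_right (add_le_add_left ?_ _) _
          exact mul_le_mul_of_nonneg_left hμM (by positivity)
end

section
/- Let X be a nonnegative random variable and let U be uniformly distributed on [0,1] and independent of X. Then for every x ≥ 0, E[X·1{U·X ≥ x}] = ∫_x^∞ P(X ≥ u) du (both sides possibly infinite). -/
open MeasureTheory ProbabilityTheory Filter
open scoped ENNReal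

/-- identity `eq:id` of the paper. If `X ≥ 0` and `U` is uniform on
`[0,1]` independent of `X`, then `E[X; UX ≥ x] = ∫_x^∞ P(X ≥ u) du` for every `x ≥ 0`
(both sides possibly infinite, so stated with Lebesgue integrals in `ℝ≥0∞`). -/
theorem size_biased_uniform_identity
    {Ω : Type*} [MeasureSpace Ω] [IsProbabilityMeasure (ℙ : Measure Ω)]
    (X : Ω → ℝ) (hXmeas : Measurable X) (hXnonneg : ∀ ω, 0 ≤ X ω)
    (U : Ω → ℝ) (hUmeas : Measurable U)
    (hUlaw : Measure.map U ℙ = (volume : Measure ℝ).restrict (Set.Icc 0 1))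
    (hindep : IndepFun X U ℙ)
    (x : ℝ) (hx : 0 ≤ x) :
    ∫⁻ ω in {ω | x ≤ U ω * X ω}, ENNReal.ofReal (X ω) ∂ℙ
      = ∫⁻ u in Set.Ioi x, ℙ {ω | u ≤ X ω} := by
  have key : ∫⁻ ω in {ω | x ≤ U ω * X ω}, ENNReal.ofReal (X ω) ∂ℙ
      = ∫⁻ ω, ENNReal.ofReal (X ω - x) ∂ℙ := by
    have hjoint : Measure.map (fun ω ↦ (X ω, U ω)) ℙ
        = (Measure.map X ℙ).prod (Measure.map U ℙ) :=
      (indepFun_iff_map_prod_eq_prod_map_map hXmeas.aemeasurable hUmeas.aemeasurable).mp hindep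
    set S : Set (ℝ × ℝ) := {p : ℝ × ℝ | x ≤ p.2 * p.1} with hS
    have hSmeas : MeasurableSet S :=
      measurableSet_le measurable_const (measurable_snd.mul measurable_fst)
    set g : ℝ × ℝ → ℝ≥0∞ := S.indicator (fun p ↦ ENNReal.ofReal p.1) with hg
    have hgmeas : Measurable g :=
      (ENNReal.measurable_ofReal.comp measurable_fst).indicator hSmeas
    have hAmeas : MeasurableSet {ω | x ≤ U ω * X ω} :=
      measurableSet_le measurable_const (hUmeas.mul hXmeas)
    have h1 : ∫⁻ ω in {ω | x ≤ U ω * X ω}, ENNReal.ofReal (X ω) ∂ℙ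
        = ∫⁻ ω, g (X ω, U ω) ∂ℙ := by
      rw [← lintegral_indicator hAmeas]
      congr 1
    rw [h1, ← lintegral_map hgmeas (hXmeas.prodMk hUmeas), hjoint, hUlaw,
      lintegral_prod _ hgmeas.aemeasurable]
    have inner : ∀ t : ℝ, 0 ≤ t →
        ∫⁻ u, g (t, u) ∂((volume : Measure ℝ).restrict (Set.Icc 0 1))
          = ENNReal.ofReal (t - x) := by
      intro t ht
      have hmset : MeasurableSet {u : ℝ | x ≤ u * t} :=
        measurableSet_le measurable_const (measurable_id.mul_const t)
      have heq : ∫⁻ u, g (t, u) ∂((volume : Measure ℝ).restrict (Set.Icc 0 1))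
          = ∫⁻ u, ({u : ℝ | x ≤ u * t}.indicator (fun _ ↦ ENNReal.ofReal t)) u
              ∂((volume : Measure ℝ).restrict (Set.Icc 0 1)) := by
        congr 1
      rw [heq, lintegral_indicator hmset, setLIntegral_const,
        Measure.restrict_apply hmset]
      rcases eq_or_lt_of_le ht with rfl | htpos
      · simp only [ENNReal.ofReal_zero, zero_mul]
        rw [eq_comm, ENNReal.ofReal_eq_zero]
        linarith
      · have hset : {u : ℝ | x ≤ u * t} ∩ Set.Icc 0 1 = Set.Icc (x / t) 1 := by
          ext u
          simp only [Set.mem_inter_iff, Set.mem_setOf_eq, Set.mem_Icc]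
          constructor
          · rintro ⟨h1, h2, h3⟩
            exact ⟨(div_le_iff₀ htpos).2 (by linarith [mul_comm u t]), h3⟩
          · rintro ⟨h1, h2⟩
            have hx' : x ≤ u * t := by
              rw [div_le_iff₀ htpos] at h1; linarith [mul_comm u t]
            exact ⟨hx', le_trans (div_nonneg hx htpos.le) h1, h2⟩
        rw [hset, Real.volume_Icc, ← ENNReal.ofReal_mul ht]
        have : t * (1 - x / t) = t - x := by field_simp
        rw [this]
    have hae : ∀ᵐ t ∂(Measure.map X ℙ), 0 ≤ t := by
      rw [ae_map_iff hXmeas.aemeasurable measurableSet_Ici]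
      exact Filter.Eventually.of_forall hXnonneg
    calc ∫⁻ t, ∫⁻ u, g (t, u) ∂((volume : Measure ℝ).restrict (Set.Icc 0 1))
          ∂(Measure.map X ℙ)
        = ∫⁻ t, ENNReal.ofReal (t - x) ∂(Measure.map X ℙ) := by
          refine lintegral_congr_ae ?_
          filter_upwards [hae] with t ht using inner t ht
      _ = ∫⁻ ω, ENNReal.ofReal (X ω - x) ∂ℙ := by
          rw [lintegral_map (by fun_prop) hXmeas]
  rw [key]
  -- Layer cake for the right-hand side.
  have hmax : (fun ω ↦ ENNReal.ofReal (X ω - x))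
      = fun ω ↦ ENNReal.ofReal (max (X ω - x) 0) := by
    funext ω
    rcases le_or_gt 0 (X ω - x) with h | h
    · rw [max_eq_left h]
    · rw [max_eq_right h.le, ENNReal.ofReal_of_nonpos h.le, ENNReal.ofReal_zero]
  have hlayer := lintegral_eq_lintegral_meas_le ℙ
    (f := fun ω ↦ max (X ω - x) 0) (Filter.Eventually.of_forall fun ω ↦ le_max_right _ _)
    ((hXmeas.sub measurable_const).max measurable_const).aemeasurable
  rw [hmax, hlayer]
  -- `∫⁻ t in Ioi 0, ℙ {t ≤ max (X - x) 0} = ∫⁻ t in Ioi 0, ℙ {t + x ≤ X}`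
  have hstep : ∀ t ∈ Set.Ioi (0:ℝ),
      ℙ {a | t ≤ max (X a - x) 0} = ℙ {a | t + x ≤ X a} := by
    intro t ht
    congr 1
    ext a
    simp only [Set.mem_setOf_eq, le_max_iff]
    constructor
    · rintro (h | h)
      · linarith
      · exact absurd h (not_le.2 ht)
    · intro h; left; linarith
  rw [setLIntegral_congr_fun measurableSet_Ioi (fun t ht ↦ hstep t ht)]
  -- change of variables u = t + x
  have hG : Measurable (fun u : ℝ ↦ ℙ {a | u ≤ X a}) := by
    apply Antitone.measurable
    intro u v huv
    exact measure_mono fun a (ha : v ≤ X a) ↦ le_trans huv ha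
  have hmap : (volume : Measure ℝ).map (fun t ↦ t + x) = volume :=
    map_add_right_eq_self volume x
  calc ∫⁻ t in Set.Ioi (0:ℝ), ℙ {a | t + x ≤ X a}
      = ∫⁻ t in (fun t : ℝ ↦ t + x) ⁻¹' (Set.Ioi x), ℙ {a | t + x ≤ X a} := by
        congr 1
        ext t
        simp
    _ = ∫⁻ u in Set.Ioi x, ℙ {a | u ≤ X a} := by
        rw [← setLIntegral_map measurableSet_Ioi hG (by fun_prop : Measurable fun t : ℝ ↦ t + x), hmap]
end

section
/- Let V be a positive random variable and μ a random nondecreasing right-continuous function from [0,∞) to ℕ with μ(0) = 0, and set A(n) = inf{t ≥ 0 : μ(t) ≥ n} for n ∈ ℕ (so A(0) = 0). Let U be uniform on [0,1], independent of the pair (V, μ), and set Ẑ = ⌊U·μ(V)⌋ and R̂ = A(Ẑ). Then for every measurable f : (0,∞) × ℕ × [0,∞] → [0,∞], E[μ(V)·f(V, Ẑ, R̂)] = Σ_{x ≥ 1} Σ_{z ≥ 0} E[f(V, z, A(z))·1{μ(V) = x + z}]. (This identifies the law of (V, Ẑ, R̂) under the offspring-biased measure P̂ with Radon–Nikodym derivative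 μ(V), which by the paper's Lemma equals the law of the lifetime, ladder height and ladder location triple (V_{T(1)−1}, 𝒵(1), R(1)) of the Lukasiewicz path.) -/
open MeasureTheory ProbabilityTheory Filter
open scoped ENNReal

namespace SBLAux

noncomputable def F' (p : ℝ × (ℝ → ℕ)) : ℝ≥0∞ :=
  ⨅ q : ℚ, if p.1 ≤ (q : ℝ) then (p.2 q : ℝ≥0∞) else ⊤

noncomputable def F (p : ℝ × (ℝ → ℕ)) : ℕ := ⌊(F' p).toReal⌋₊

noncomputable def G (p : (ℝ → ℕ) × ℕ) : ℝ≥0∞ :=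
  ⨅ q : ℚ, if 0 ≤ (q : ℝ) ∧ p.2 ≤ p.1 q then ENNReal.ofReal q else ⊤

lemma measurable_F' : Measurable F' := by
  apply Measurable.iInf
  intro q
  refine Measurable.ite (measurableSet_le measurable_fst measurable_const) ?_ measurable_const
  exact measurable_from_top.comp ((measurable_pi_apply _).comp measurable_snd)

lemma measurable_F : Measurable F :=
  Nat.measurable_floor.comp (ENNReal.measurable_toReal.comp measurable_F')

lemma measurable_G : Measurable G := by
  apply measurable_from_prod_countable_left
  intro n
  apply Measurable.iInf
  intro q
  refine Measurable.ite ?_ measurable_const measurable_const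
  have h2 : MeasurableSet ((fun m : ℝ → ℕ => m (q:ℝ)) ⁻¹' {k : ℕ | n ≤ k}) :=
    (measurable_pi_apply _) ((Set.to_countable _).measurableSet)
  exact (MeasurableSet.const _).inter h2

lemma F'_eq {v : ℝ} {m : ℝ → ℕ} (hmono : Monotone m)
    (hrc : ∃ ε > (0:ℝ), ∀ s ∈ Set.Ico v (v + ε), m s = m v) :
    F' (v, m) = (m v : ℝ≥0∞) := by
  obtain ⟨ε, hε, h⟩ := hrc
  apply le_antisymm
  · obtain ⟨q, hq1, hq2⟩ := exists_rat_btwn (show v < v + ε by linarith)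
    refine iInf_le_of_le q ?_
    rw [if_pos (show (v, m).1 ≤ (q:ℝ) from hq1.le)]
    rw [show (v, m).2 (q:ℝ) = m v from h q ⟨hq1.le, hq2⟩]
  · refine le_iInf fun q => ?_
    by_cases hq : (v, m).1 ≤ (q : ℝ)
    · rw [if_pos hq]
      exact_mod_cast hmono hq
    · rw [if_neg hq]; exact le_top

lemma F_eq {v : ℝ} {m : ℝ → ℕ} (hmono : Monotone m)
    (hrc : ∃ ε > (0:ℝ), ∀ s ∈ Set.Ico v (v + ε), m s = m v) :
    F (v, m) = m v := by
  rw [F, F'_eq hmono hrc]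
  simp

lemma G_eq {m : ℝ → ℕ} (hmono : Monotone m) (n : ℕ) :
    G (m, n) = sInf (ENNReal.ofReal '' {t : ℝ | 0 ≤ t ∧ n ≤ m t}) := by
  apply le_antisymm
  · refine le_sInf ?_
    rintro b ⟨t, ⟨ht0, htn⟩, rfl⟩
    refine ENNReal.le_of_forall_pos_le_add fun ε hε _ => ?_
    have hε' : (0:ℝ) < ε := hε
    obtain ⟨q, hq1, hq2⟩ := exists_rat_btwn (show t < t + (ε:ℝ) by linarith)
    calc G (m, n) ≤ ENNReal.ofReal q := by
          refine iInf_le_of_le q ?_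
          rw [if_pos (show 0 ≤ (q:ℝ) ∧ n ≤ (m, n).1 (q:ℝ) from
            ⟨le_trans ht0 hq1.le, le_trans htn (hmono hq1.le)⟩)]
      _ ≤ ENNReal.ofReal t + ↑ε := by
          refine le_trans (ENNReal.ofReal_le_ofReal hq2.le) ?_
          refine le_trans ENNReal.ofReal_add_le ?_
          rw [ENNReal.ofReal_coe_nnreal]
  · refine le_iInf fun q => ?_
    by_cases hq : 0 ≤ (q:ℝ) ∧ n ≤ (m, n).1 (q:ℝ)
    · rw [if_pos hq]
      exact sInf_le ⟨q, ⟨hq.1, hq.2⟩, rfl⟩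
    · rw [if_neg hq]; exact le_top


lemma sum_range_eq_tsum (k : ℕ) (g : ℕ → ℝ≥0∞) :
    ∑ z ∈ Finset.range k, g z = ∑' z : ℕ, if z < k then g z else 0 := by
  rw [tsum_eq_sum (s := Finset.range k)
    (fun b hb => by rw [Finset.mem_range] at hb; rw [if_neg hb])]
  exact Finset.sum_congr rfl fun b hb => by
    rw [Finset.mem_range] at hb; rw [if_pos hb]

lemma double_tsum (k : ℕ) (g : ℕ → ℝ≥0∞) :
    ∑' (x : ℕ) (z : ℕ), (if k = (x + 1) + z then g z else 0)
      = ∑' (z : ℕ), if z < k then g z else 0 := by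
  have h1 : ∀ x : ℕ, (∑' (z : ℕ), if k = (x + 1) + z then g z else 0)
      = if x < k then g (k - 1 - x) else 0 := by
    intro x
    by_cases hx : x < k
    · rw [tsum_eq_single (k - 1 - x) (fun z hz => if_neg (by omega))]
      rw [if_pos (by omega), if_pos hx]
    · rw [if_neg hx]
      convert tsum_zero with z
      exact if_neg (by omega)
  simp_rw [h1]
  rw [← sum_range_eq_tsum k g,
    tsum_eq_sum (s := Finset.range k)
      (fun b hb => by rw [Finset.mem_range] at hb; rw [if_neg hb])]
  rw [← Finset.sum_range_reflect g k]
  exact Finset.sum_congr rfl fun b hb => by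
    rw [Finset.mem_range] at hb; rw [if_pos hb]

lemma inner_integral (k : ℕ) (g : ℕ → ℝ≥0∞) :
    ∫⁻ u in Set.Icc (0:ℝ) 1, (k : ℝ≥0∞) * g ⌊u * (k : ℝ)⌋₊
      = ∑ z ∈ Finset.range k, g z := by
  rw [← Measure.restrict_congr_set Ico_ae_eq_Icc]
  rcases Nat.eq_zero_or_pos k with rfl | hk
  · simp
  have hk' : (0:ℝ) < k := by exact_mod_cast hk
  set s : ℕ → Set ℝ := fun i =>
    if i < k then Set.Ico ((i:ℝ)/k) (((i:ℝ)+1)/k) else ∅ with hs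
  have hsm : ∀ i, MeasurableSet (s i) := by
    intro i; rw [hs]; dsimp only
    split_ifs
    exacts [measurableSet_Ico, MeasurableSet.empty]
  have hdisj : Pairwise (Function.onFun Disjoint s) := by
    intro i j hij
    rw [Function.onFun, hs]; dsimp only
    split_ifs with h1 h2 h2
    · rw [Set.Ico_disjoint_Ico]
      rcases hij.lt_or_gt with h | h
      · refine le_trans (min_le_left _ _) (le_trans ?_ (le_max_right _ _))
        exact (div_le_div_iff_of_pos_right hk').mpr (by exact_mod_cast h)
      · refine le_trans (min_le_right _ _) (le_trans ?_ (le_max_left _ _))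
        exact (div_le_div_iff_of_pos_right hk').mpr (by exact_mod_cast h)
    all_goals simp
  have hunion : Set.Ico (0:ℝ) 1 = ⋃ i, s i := by
    ext u
    simp only [Set.mem_iUnion, hs]
    constructor
    · rintro ⟨hu0, hu1⟩
      have h0uk : (0:ℝ) ≤ u * k := by positivity
      have hflt : ⌊u * (k:ℝ)⌋₊ < k := by
        rw [Nat.floor_lt h0uk]
        nlinarith
      refine ⟨⌊u * (k:ℝ)⌋₊, ?_⟩
      rw [if_pos hflt]
      constructor
      · rw [div_le_iff₀ hk']
        exact Nat.floor_le h0uk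
      · rw [lt_div_iff₀ hk']
        exact Nat.lt_floor_add_one _
    · rintro ⟨i, hi⟩
      by_cases h : i < k
      · rw [if_pos h] at hi
        obtain ⟨hi1, hi2⟩ := hi
        constructor
        · exact le_trans (by positivity) hi1
        · have : ((i:ℝ)+1)/k ≤ 1 := by
            rw [div_le_one hk']
            exact_mod_cast Nat.succ_le_of_lt h
          linarith
      · rw [if_neg h] at hi; exact absurd hi (Set.notMem_empty u)
  rw [hunion, lintegral_iUnion hsm hdisj]
  rw [tsum_eq_sum (s := Finset.range k) (fun b hb => by
    rw [Finset.mem_range] at hb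
    rw [hs]; dsimp only; rw [if_neg hb]
    simp)]
  apply Finset.sum_congr rfl
  intro i hi
  rw [Finset.mem_range] at hi
  have hsi : s i = Set.Ico ((i:ℝ)/k) (((i:ℝ)+1)/k) := by rw [hs]; dsimp only; rw [if_pos hi]
  rw [hsi]
  have hconst : ∀ u ∈ Set.Ico ((i:ℝ)/k) (((i:ℝ)+1)/k),
      (k : ℝ≥0∞) * g ⌊u * (k:ℝ)⌋₊ = (k : ℝ≥0∞) * g i := by
    intro u hu
    have h0i : (0:ℝ) ≤ (i:ℝ)/k := by positivity
    have h0u : 0 ≤ u := le_trans h0i hu.1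
    have hfl : ⌊u * (k:ℝ)⌋₊ = i := by
      rw [Nat.floor_eq_iff (by positivity : (0:ℝ) ≤ u * k)] -- may need different form
      constructor
      · rw [← div_le_iff₀ hk']; exact hu.1
      · rw [← lt_div_iff₀ hk']; exact hu.2
    rw [hfl]
  rw [setLIntegral_congr_fun measurableSet_Ico hconst]
  rw [setLIntegral_const, Real.volume_Ico]
  have harith : ((i:ℝ)+1)/k - (i:ℝ)/k = 1/(k:ℝ) := by ring
  rw [harith]
  have hof : ENNReal.ofReal (1/(k:ℝ)) = ((k:ℕ) : ℝ≥0∞)⁻¹ := by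
    rw [one_div, ENNReal.ofReal_inv_of_pos hk', ENNReal.ofReal_natCast]
  rw [hof, mul_right_comm, ENNReal.mul_inv_cancel (by exact_mod_cast hk.ne') (by simp), one_mul]

end SBLAux

open SBLAux in
/-- Lemma `lemma:law` of the paper. With `Ẑ = ⌊U μ(V)⌋` and
`R̂ = A(Ẑ)` (the location of the `Ẑ`-th atom of `μ`), for every nonnegative measurable
`f`, `E[μ(V) f(V, Ẑ, R̂)] = Σ_{x ≥ 1} Σ_{z ≥ 0} E[f(V, z, A(z)); μ(V) = x + z]`. -/
theorem size_biased_ladder_law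
    {Ω : Type*} [MeasureSpace Ω] [IsProbabilityMeasure (ℙ : Measure Ω)]
    (V : Ω → ℝ) (hVmeas : Measurable V) (hVpos : ∀ ω, 0 < V ω)
    (μ : Ω → ℝ → ℕ)
    (hμmeas : ∀ t, Measurable fun ω => μ ω t)
    (hμmono : ∀ ω, Monotone (μ ω))
    (hμ0 : ∀ ω, μ ω 0 = 0)
    (hμrc : ∀ ω t, ∃ ε > (0 : ℝ), ∀ s ∈ Set.Ico t (t + ε), μ ω s = μ ω t)
    (A : Ω → ℕ → ℝ≥0∞)
    (hA : ∀ ω n, A ω n = sInf (ENNReal.ofReal '' {t : ℝ | 0 ≤ t ∧ n ≤ μ ω t}))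
    (U : Ω → ℝ) (hUmeas : Measurable U)
    (hUlaw : Measure.map U ℙ = (volume : Measure ℝ).restrict (Set.Icc 0 1))
    (hindep : IndepFun (fun ω => (V ω, μ ω)) U ℙ)
    (f : ℝ × ℕ × ℝ≥0∞ → ℝ≥0∞) (hf : Measurable f) :
    ∫⁻ ω, (μ ω (V ω) : ℝ≥0∞)
        * f (V ω, ⌊U ω * (μ ω (V ω) : ℝ)⌋₊, A ω ⌊U ω * (μ ω (V ω) : ℝ)⌋₊) ∂ℙ
      = ∑' (x : ℕ) (z : ℕ),
          ∫⁻ ω in {ω | μ ω (V ω) = (x + 1) + z}, f (V ω, z, A ω z) ∂ℙ := by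
  
  classical
  set P : Ω → ℝ × (ℝ → ℕ) := fun ω => (V ω, μ ω) with hPdef
  have hP : Measurable P := hVmeas.prodMk (measurable_pi_lambda _ hμmeas)
  have hNP : ∀ ω, F (V ω, μ ω) = μ ω (V ω) := fun ω => F_eq (hμmono ω) (hμrc ω (V ω))
  have hGA : ∀ ω z, G (μ ω, z) = A ω z := fun ω z => (G_eq (hμmono ω) z).trans (hA ω z).symm
  -- the measurable integrand on the product space
  set φ : (ℝ × (ℝ → ℕ)) × ℝ → ℝ≥0∞ := fun x =>
    (F x.1 : ℝ≥0∞) * f (x.1.1, ⌊x.2 * (F x.1 : ℝ)⌋₊, G (x.1.2, ⌊x.2 * (F x.1 : ℝ)⌋₊)) with hφdef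
  have hF1 : Measurable fun x : (ℝ × (ℝ → ℕ)) × ℝ => F x.1 := measurable_F.comp measurable_fst
  have hfloor : Measurable fun x : (ℝ × (ℝ → ℕ)) × ℝ => ⌊x.2 * (F x.1 : ℝ)⌋₊ :=
    Nat.measurable_floor.comp (measurable_snd.mul (measurable_from_top.comp hF1))
  have hφ : Measurable φ := by
    apply Measurable.mul (measurable_from_top.comp hF1)
    exact hf.comp ((measurable_fst.fst).prodMk (hfloor.prodMk
      (measurable_G.comp ((measurable_fst.snd).prodMk hfloor))))
  -- middle integrand
  set ψ : (ℝ × (ℝ → ℕ)) → ℝ≥0∞ := fun p =>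
    ∑' z : ℕ, if z < F p then f (p.1, z, G (p.2, z)) else 0 with hψdef
  have hψ : Measurable ψ := by
    apply Measurable.ennreal_tsum
    intro z
    refine Measurable.ite (measurable_F ((Set.to_countable {n : ℕ | z < n}).measurableSet))
      ?_ measurable_const
    exact hf.comp (measurable_fst.prodMk (measurable_const.prodMk
      (measurable_G.comp (measurable_snd.prodMk measurable_const))))
  haveI : SFinite (Measure.map U ℙ) := by rw [hUlaw]; infer_instance
  -- LHS = ∫ φ ∘ (P, U)
  have step1 : ∫⁻ ω, (μ ω (V ω) : ℝ≥0∞)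
        * f (V ω, ⌊U ω * (μ ω (V ω) : ℝ)⌋₊, A ω ⌊U ω * (μ ω (V ω) : ℝ)⌋₊) ∂ℙ
      = ∫⁻ ω, φ (P ω, U ω) ∂ℙ := by
    apply lintegral_congr
    intro ω
    simp only [hφdef, hPdef, hNP ω, hGA ω]
  have hmap : Measure.map (fun ω => (P ω, U ω)) ℙ = (Measure.map P ℙ).prod (Measure.map U ℙ) :=
    (indepFun_iff_map_prod_eq_prod_map_map hP.aemeasurable hUmeas.aemeasurable).mp hindep
  have step2 : ∫⁻ ω, φ (P ω, U ω) ∂ℙ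
      = ∫⁻ p, ∫⁻ u, φ (p, u) ∂(Measure.map U ℙ) ∂(Measure.map P ℙ) := by
    rw [← lintegral_map hφ (hP.prodMk hUmeas), hmap, lintegral_prod _ hφ.aemeasurable]
  have step3 : ∀ p : ℝ × (ℝ → ℕ), ∫⁻ u, φ (p, u) ∂(Measure.map U ℙ) = ψ p := by
    intro p
    rw [hUlaw]
    have : ∫⁻ u in Set.Icc (0:ℝ) 1, φ (p, u) ∂(volume : Measure ℝ)
        = ∫⁻ u in Set.Icc (0:ℝ) 1, (F p : ℝ≥0∞) * (fun z => f (p.1, z, G (p.2, z))) ⌊u * (F p : ℝ)⌋₊ ∂(volume : Measure ℝ) := rfl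
    rw [this, inner_integral (F p) (fun z => f (p.1, z, G (p.2, z))),
      sum_range_eq_tsum]
  have step4 : ∫⁻ p, ψ p ∂(Measure.map P ℙ)
      = ∫⁻ ω, ∑' z : ℕ, (if z < μ ω (V ω) then f (V ω, z, A ω z) else 0) ∂ℙ := by
    rw [lintegral_map hψ hP]
    apply lintegral_congr
    intro ω
    simp only [hψdef, hPdef, hNP ω, hGA ω]
  -- RHS manipulation
  have hNmeas : Measurable fun ω => μ ω (V ω) := by
    have : (fun ω => μ ω (V ω)) = fun ω => F (P ω) := funext fun ω => (hNP ω).symm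
    rw [this]; exact measurable_F.comp hP
  have hAmeas : ∀ z : ℕ, Measurable fun ω => A ω z := by
    intro z
    have : (fun ω => A ω z) = fun ω => G ((P ω).2, z) := funext fun ω => (hGA ω z).symm
    rw [this]
    exact measurable_G.comp ((hP.snd).prodMk measurable_const)
  have hfz : ∀ z : ℕ, Measurable fun ω => f (V ω, z, A ω z) := fun z =>
    hf.comp (hVmeas.prodMk (measurable_const.prodMk (hAmeas z)))
  have hsetm : ∀ c : ℕ, MeasurableSet {ω | μ ω (V ω) = c} := fun c =>
    hNmeas ((Set.to_countable {c}).measurableSet)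
  have hindm : ∀ x z : ℕ, Measurable fun ω =>
      (if μ ω (V ω) = (x + 1) + z then f (V ω, z, A ω z) else 0) := fun x z =>
    Measurable.ite (hsetm _) (hfz z) measurable_const
  have stepR : ∑' (x : ℕ) (z : ℕ),
        ∫⁻ ω in {ω | μ ω (V ω) = (x + 1) + z}, f (V ω, z, A ω z) ∂ℙ
      = ∫⁻ ω, ∑' z : ℕ, (if z < μ ω (V ω) then f (V ω, z, A ω z) else 0) ∂ℙ := by
    have e1 : ∀ x z : ℕ, ∫⁻ ω in {ω | μ ω (V ω) = (x + 1) + z}, f (V ω, z, A ω z) ∂ℙ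
        = ∫⁻ ω, (if μ ω (V ω) = (x + 1) + z then f (V ω, z, A ω z) else 0) ∂ℙ := by
      intro x z
      rw [← lintegral_indicator (hsetm ((x + 1) + z))]
      apply lintegral_congr
      intro ω
      simp [Set.indicator_apply]
    calc ∑' (x : ℕ) (z : ℕ), ∫⁻ ω in {ω | μ ω (V ω) = (x + 1) + z}, f (V ω, z, A ω z) ∂ℙ
        = ∑' (x : ℕ), ∫⁻ ω, ∑' (z : ℕ),
            (if μ ω (V ω) = (x + 1) + z then f (V ω, z, A ω z) else 0) ∂ℙ := by
          apply tsum_congr; intro x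
          rw [lintegral_tsum (fun z => (hindm x z).aemeasurable)]
          exact tsum_congr fun z => e1 x z
      _ = ∫⁻ ω, ∑' (x : ℕ) (z : ℕ),
            (if μ ω (V ω) = (x + 1) + z then f (V ω, z, A ω z) else 0) ∂ℙ := by
          rw [lintegral_tsum]
          intro x
          exact (Measurable.ennreal_tsum (fun z => hindm x z)).aemeasurable
      _ = ∫⁻ ω, ∑' z : ℕ, (if z < μ ω (V ω) then f (V ω, z, A ω z) else 0) ∂ℙ := by
          apply lintegral_congr
          intro ω
          exact double_tsum (μ ω (V ω)) (fun z => f (V ω, z, A ω z))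
  rw [step1, step2, stepR, ← step4]
  exact lintegral_congr step3
end

section
/- Under Assumptions V, R1, R2 with offspring-biased quantities Ẑ = ⌊U·μ(V)⌋ and R̂ = A(Ẑ): let g : ℝ² → ℝ be measurable, bounded, and equal to 0 in a neighborhood of the origin (i.e. there is m > 0 with g(u,v) = 0 whenever |u| < m and |v| < m). Then there exists δ₀ > 0 such that for every δ ∈ (0, δ₀), p·v_p·E[μ(V)·g(v_p·R̂, v_p·Ẑ)·1{V < δ/v_p}] → 0 as p → ∞. (By the size-biasing lemma, the left side equals p·v_p·E[g(v_p·R(1), v_p·𝒵(1)); V_{T(1)−1} < δ/v_p] for the ladder variables of the Lukasiewicz path.) -/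
open MeasureTheory ProbabilityTheory Filter

set_option maxHeartbeats 2000000

/-- Lemma `lemma:g<` of the paper. Under Assumptions V, R1, R2, for
`g` bounded measurable vanishing in a neighborhood of the origin, there is `δ₀ > 0`
such that for every `δ ∈ (0, δ₀)`,
`p v_p E[μ(V) g(v_p R̂, v_p Ẑ); V < δ/v_p] → 0`, where `Ẑ = ⌊U μ(V)⌋`, `R̂ = A(Ẑ)`. -/
theorem biased_limit_small_V
    {Ω : Type*} [MeasureSpace Ω] [IsProbabilityMeasure (ℙ : Measure Ω)]
    (γ : ℝ) (hγ : γ ∈ Set.Ioo (1 : ℝ) 2)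
    (V : Ω → ℝ) (hVmeas : Measurable V) (hVpos : ∀ ω, 0 < V ω)
    (v : ℕ → ℝ) (hv : ∀ p, 0 < v p) (hv0 : Tendsto v atTop (nhds 0))
    (hV : ∀ x > (0 : ℝ), Tendsto (fun p : ℕ =>
        (p : ℝ) * (ℙ {ω | x / v p ≤ V ω}).toReal) atTop (nhds (x ^ (-γ))))
    (μ : Ω → ℝ → ℕ)
    (hμmeas : ∀ t, Measurable fun ω => μ ω t)
    (hμmono : ∀ ω, Monotone (μ ω))
    (hμ0 : ∀ ω, μ ω 0 = 0)
    (hμrc : ∀ ω t, ∃ ε > (0 : ℝ), ∀ s ∈ Set.Ico t (t + ε), μ ω s = μ ω t)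
    (hVμindep : IndepFun V μ ℙ)
    (a : ℝ) (ha : 0 < a)
    (hR1 : Tendsto (fun t : ℝ => ∫ ω, |(μ ω t : ℝ) / t - 1 / a|) atTop (nhds 0))
    (a' : ℝ) (ha' : a' ∈ Set.Ioo (0 : ℝ) a)
    (hR2 : ∀ x > (0 : ℝ), Tendsto (fun p : ℕ =>
        (p : ℝ) * (ℙ {ω | 1 / a' ≤ v p * (μ ω (x / v p) : ℝ) / x}).toReal)
        atTop (nhds 0))
    (A : Ω → ℕ → ℝ)
    (hA : ∀ ω n, A ω n = sInf {t : ℝ | 0 ≤ t ∧ n ≤ μ ω t})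
    (U : Ω → ℝ) (hUmeas : Measurable U)
    (hUlaw : Measure.map U ℙ = (volume : Measure ℝ).restrict (Set.Icc 0 1))
    (hUindep : IndepFun (fun ω => (V ω, μ ω)) U ℙ)
    (g : ℝ × ℝ → ℝ) (hgmeas : Measurable g)
    (hgbdd : ∃ C : ℝ, ∀ q, |g q| ≤ C)
    (m : ℝ) (hm : 0 < m)
    (hgzero : ∀ u w : ℝ, |u| < m → |w| < m → g (u, w) = 0) :
    ∃ δ₀ > (0 : ℝ), ∀ δ : ℝ, 0 < δ → δ < δ₀ →
      Tendsto (fun p : ℕ => (p : ℝ) * v p *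
          ∫ ω in {ω | V ω < δ / v p},
            (μ ω (V ω) : ℝ) * g (v p * A ω ⌊U ω * (μ ω (V ω) : ℝ)⌋₊,
                                  v p * (⌊U ω * (μ ω (V ω) : ℝ)⌋₊ : ℝ)))
        atTop (nhds 0) := by
  classical
  obtain ⟨C, hC⟩ := hgbdd
  have hC0 : (0:ℝ) ≤ C := le_trans (abs_nonneg _) (hC (0, 0))
  obtain ⟨hγ1, hγ2⟩ := hγ
  have hγ0 : (0:ℝ) < γ := by linarith
  -- constants
  set e : ℝ := (γ - 1) / 2 with he_def
  have he : 0 < e := by rw [he_def]; linarith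
  set s : ℝ := (4:ℝ) ^ (1/e) with hs_def
  have hs0 : (0:ℝ) < s := Real.rpow_pos_of_pos (by norm_num) _
  have hs1 : (1:ℝ) < s := by
    rw [hs_def]
    exact (Real.one_lt_rpow_iff_of_pos (by norm_num)).2 (Or.inl ⟨by norm_num, one_div_pos.2 he⟩)
  have hse : s ^ e = (4:ℝ) := by
    rw [hs_def, ← Real.rpow_mul (by norm_num : (0:ℝ) ≤ 4), one_div,
      inv_mul_cancel₀ (ne_of_gt he), Real.rpow_one]
  set β : ℝ := (γ - 1) / (2 * γ) with hβ_def
  have hβ0 : 0 < β := by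
    rw [hβ_def]
    exact div_pos (by linarith) (by linarith)
  have hβ1 : β < 1 := by
    rw [hβ_def, div_lt_one (by linarith)]; linarith
  set w : ℝ := s ^ β with hw_def
  have hw0 : (0:ℝ) < w := Real.rpow_pos_of_pos hs0 _
  have hw1 : (1:ℝ) < w := (Real.one_lt_rpow_iff_of_pos hs0).2 (Or.inl ⟨hs1, hβ0⟩)
  set ρ : ℝ := s ^ (1 - β) with hρ_def
  have hρ0 : (0:ℝ) < ρ := Real.rpow_pos_of_pos hs0 _
  have hwγ : w ^ γ = 4 := by
    rw [hw_def, ← Real.rpow_mul hs0.le]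
    have hβγ : β * γ = e := by
      rw [hβ_def, he_def]; field_simp
    rw [hβγ, hse]
  have hργ : ρ ^ γ = 4 * s := by
    rw [hρ_def, ← Real.rpow_mul hs0.le]
    have h1 : (1 - β) * γ = 1 + e := by
      rw [hβ_def, he_def]; field_simp; ring
    rw [h1, Real.rpow_add hs0, Real.rpow_one, hse, mul_comm]
  have hρw : ρ * w = s := by
    rw [hρ_def, hw_def, ← Real.rpow_add hs0, sub_add_cancel, Real.rpow_one]
  have ha'0 : 0 < a' := ha'.1
  -- δ₀
  refine ⟨m * a' / ((1 + a') * w), by positivity, ?_⟩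
  intro δ hδpos hδlt
  have hδm : δ < m := by
    apply lt_of_lt_of_le hδlt
    rw [div_le_iff₀ (by positivity)]
    have h1 : m * ((1+a') * 1) ≤ m * ((1+a') * w) := by
      apply mul_le_mul_of_nonneg_left ?_ hm.le
      apply mul_le_mul_of_nonneg_left hw1.le (by linarith)
    nlinarith
  have hδwa : δ * w < m * a' := by
    have h1 := (lt_div_iff₀ (by positivity : (0:ℝ) < (1+a') * w)).1 hδlt
    nlinarith [mul_nonneg (mul_pos hδpos hw0).le ha'0.le]
  -- comparison lemma from Assumption V
  have L2 : ∀ x : ℝ, 0 < x → ∃ P : ℕ, 1 ≤ P ∧ ∀ p q : ℕ, P ≤ p → P ≤ q →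
      v q ≤ x * v p → (1/2) * x ^ (-γ) * p ≤ (q:ℝ) := by
    intro x hx
    have h1 : Tendsto (fun q : ℕ => (q:ℝ) * (ℙ {ω | 1 / v q ≤ V ω}).toReal)
        atTop (nhds 1) := by
      have := hV 1 one_pos
      rwa [Real.one_rpow] at this
    have h2 := hV (1/x) (by positivity)
    have hx2 : ((1:ℝ)/x) ^ (-γ) = x ^ γ := by
      rw [one_div, Real.inv_rpow hx.le, Real.rpow_neg hx.le, inv_inv]
    rw [hx2] at h2
    have hxγ : (0:ℝ) < x ^ γ := Real.rpow_pos_of_pos hx γ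
    obtain ⟨P1, hP1⟩ := eventually_atTop.1
      (h1.eventually (eventually_ge_nhds (by norm_num : (3/4:ℝ) < 1)))
    obtain ⟨P2, hP2⟩ := eventually_atTop.1
      (h2.eventually (eventually_le_nhds (by nlinarith : x ^ γ < (3/2) * x ^ γ)))
    refine ⟨max P1 P2 + 1, le_add_self, fun p q hp hq hle => ?_⟩
    have hq1 : (3/4:ℝ) ≤ (q:ℝ) * (ℙ {ω | 1 / v q ≤ V ω}).toReal :=
      hP1 q (by omega)
    have hp2 : (p:ℝ) * (ℙ {ω | (1/x) / v p ≤ V ω}).toReal ≤ (3/2) * x ^ γ :=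
      hP2 p (by omega)
    have hsub : {ω | 1 / v q ≤ V ω} ⊆ {ω | (1/x) / v p ≤ V ω} := by
      intro ω hω
      simp only [Set.mem_setOf_eq] at hω ⊢
      refine le_trans ?_ hω
      rw [div_div, one_div, one_div]
      exact inv_anti₀ (hv q) hle
    have hmono : (ℙ {ω | 1 / v q ≤ V ω}).toReal
        ≤ (ℙ {ω | (1/x) / v p ≤ V ω}).toReal :=
      ENNReal.toReal_mono (measure_ne_top _ _) (measure_mono hsub)
    set Aq := (ℙ {ω | 1 / v q ≤ V ω}).toReal with hAq
    set Ap := (ℙ {ω | (1/x) / v p ≤ V ω}).toReal with hAp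
    have hAq0 : 0 ≤ Aq := ENNReal.toReal_nonneg
    have hAp0 : 0 ≤ Ap := ENNReal.toReal_nonneg
    have hp0 : (0:ℝ) ≤ (p:ℝ) := Nat.cast_nonneg p
    have hq0 : (0:ℝ) ≤ (q:ℝ) := Nat.cast_nonneg q
    have key : (1/2:ℝ) * p ≤ (q:ℝ) * x ^ γ := by
      have k1 : (3/4:ℝ) * p ≤ (q:ℝ) * Aq * p := mul_le_mul_of_nonneg_right hq1 hp0
      have k2 : (q:ℝ) * Aq * p ≤ (q:ℝ) * Ap * p :=
        mul_le_mul_of_nonneg_right (mul_le_mul_of_nonneg_left hmono hq0) hp0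
      have k3 : (q:ℝ) * ((p:ℝ) * Ap) ≤ (q:ℝ) * ((3/2) * x ^ γ) :=
        mul_le_mul_of_nonneg_left hp2 hq0
      have k4 : (q:ℝ) * Ap * p = (q:ℝ) * ((p:ℝ) * Ap) := by ring
      linarith
    have hxneg : x ^ (-γ) = (x ^ γ)⁻¹ := Real.rpow_neg hx.le γ
    rw [hxneg]
    calc (1/2) * (x ^ γ)⁻¹ * p = ((1/2) * p) * (x ^ γ)⁻¹ := by ring
      _ ≤ ((q:ℝ) * x ^ γ) * (x ^ γ)⁻¹ :=
          mul_le_mul_of_nonneg_right key (by positivity)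
      _ = (q:ℝ) := by field_simp
  obtain ⟨Pw, hPw1, hPw⟩ := L2 w hw0
  obtain ⟨Pρ, hPρ1, hPρ⟩ := L2 (1/ρ) (by positivity)
  obtain ⟨Pg, hPg1, hPg⟩ := L2 (1/w) (by positivity)
  -- the gap property: eventually v does not drop by more than a factor w in one step
  have hgap : ∀ q : ℕ, max Pg 2 ≤ q → v q ≤ w * v (q + 1) := by
    intro q hq
    by_contra hcon
    push_neg at hcon
    have hle : v (q+1) ≤ (1/w) * v q := by
      rw [one_div, inv_mul_eq_div, le_div_iff₀ hw0]
      nlinarith [hv (q+1)]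
    have hPgq : Pg ≤ q := le_trans (le_max_left _ _) hq
    have h2q : 2 ≤ q := le_trans (le_max_right _ _) hq
    have := hPg q (q+1) hPgq (by omega) hle
    have h4 : ((1:ℝ)/w) ^ (-γ) = 4 := by
      rw [one_div, Real.inv_rpow hw0.le, Real.rpow_neg hw0.le, inv_inv, hwγ]
    rw [h4] at this
    have hq2 : (2:ℝ) ≤ (q:ℝ) := by exact_mod_cast h2q
    push_cast at this
    linarith
  -- the main quantitative estimate
  have main : ∀ ε : ℝ, 0 < ε → ∃ P : ℕ, ∀ p : ℕ, P ≤ p →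
      |(p : ℝ) * v p * ∫ ω in {ω | V ω < δ / v p},
          (μ ω (V ω) : ℝ) * g (v p * A ω ⌊U ω * (μ ω (V ω) : ℝ)⌋₊,
            v p * (⌊U ω * (μ ω (V ω) : ℝ)⌋₊ : ℝ))| ≤ 16 * m * s * (C+1) * ε := by
    intro ε hε
    obtain ⟨Q₁, hQ₁⟩ := eventually_atTop.1
      ((hR2 (m * a') (by positivity)).eventually (eventually_le_nhds hε))
    set P' : ℕ := max (max Pw Pρ) (max Q₁ (max Pg 2)) + 1 with hP'_def
    have hPwP' : Pw ≤ P' := le_trans (le_trans (le_max_left _ _) (le_max_left _ _)) (Nat.le_succ _)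
    have hPρP' : Pρ ≤ P' := le_trans (le_trans (le_max_right _ _) (le_max_left _ _)) (Nat.le_succ _)
    have hQ₁P' : Q₁ ≤ P' := le_trans (le_trans (le_max_left _ _) (le_max_right _ _)) (Nat.le_succ _)
    have hPg2P' : max Pg 2 + 1 ≤ P' := Nat.add_le_add_right (le_trans (le_max_right Q₁ _) (le_max_right (max Pw Pρ) _)) 1
    have hP'1 : 1 ≤ P' := Nat.succ_le_succ (Nat.zero_le _)
    have hvP' : 0 < v P' := hv P'
    obtain ⟨P₆, hP₆⟩ := eventually_atTop.1
      (hv0.eventually (eventually_lt_nhds (show (0:ℝ) < v P' / w by positivity)))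
    refine ⟨max (max Pw P₆) 1, fun p hp => ?_⟩
    have hpPw : Pw ≤ p := le_trans (le_trans (le_max_left _ _) (le_max_left _ _)) hp
    have hpP₆ : P₆ ≤ p := le_trans (le_trans (le_max_right _ _) (le_max_left _ _)) hp
    have hp1 : 1 ≤ p := le_trans (le_max_right _ _) hp
    have hvp : 0 < v p := hv p
    have hpR : (0:ℝ) < (p:ℝ) := by exact_mod_cast hp1
    have hwvp : w * v p < v P' := by
      have := hP₆ p hpP₆
      rw [lt_div_iff₀ hw0] at this
      linarith [this]
    -- choice of shifted indices
    have hex : ∀ k : ℕ, ∃ q : ℕ, P' ≤ q ∧ v q ≤ w * v p / s ^ k := by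
      intro k
      have hpos : (0:ℝ) < w * v p / s ^ k := by positivity
      obtain ⟨q, hq1, hq2⟩ :=
        ((hv0.eventually (eventually_lt_nhds hpos)).and (eventually_ge_atTop P')).exists
      exact ⟨q, hq2, hq1.le⟩
    set q : ℕ → ℕ := fun k => Nat.find (hex k) with hq_def
    have hqspec : ∀ k, P' ≤ q k ∧ v (q k) ≤ w * v p / s ^ k := fun k => Nat.find_spec (hex k)
    have hqP' : ∀ k, P' ≤ q k := fun k => (hqspec k).1
    have hsk1 : ∀ k : ℕ, (1:ℝ) ≤ s ^ k := fun k => one_le_pow₀ hs1.le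
    have hqlow : ∀ k, v p / s ^ k < v (q k) := by
      intro k
      have hub : v (q k) ≤ w * v p / s ^ k := (hqspec k).2
      rcases eq_or_lt_of_le (hqP' k) with heq | hlt
      · exfalso
        have : v P' ≤ w * v p / s ^ k := heq ▸ hub
        have h2 : w * v p / s ^ k ≤ w * v p := div_le_self (by positivity) (hsk1 k)
        linarith
      · -- q k - 1 fails the predicate
        have hq1 : q k - 1 < q k := by omega
        have hmin := Nat.find_min (hex k) hq1
        push_neg at hmin
        have hP'pred : P' ≤ q k - 1 := by omega
        have hvlow : w * v p / s ^ k < v (q k - 1) := hmin hP'pred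
        have hgapq : v (q k - 1) ≤ w * v (q k) := by
          have h2 : max Pg 2 ≤ q k - 1 := by omega
          have h3 := hgap (q k - 1) h2
          have h4 : q k - 1 + 1 = q k := by omega
          rwa [h4] at h3
        have : w * v p / s ^ k < w * v (q k) := lt_of_lt_of_le hvlow hgapq
        rw [div_lt_iff₀ (by positivity)] at this ⊢
        nlinarith
    -- growth of q k
    have hq0geo : (p:ℝ)/8 ≤ (q 0 : ℝ) := by
      have hle : v (q 0) ≤ w * v p := by
        have := (hqspec 0).2
        rwa [pow_zero, div_one] at this
      have := hPw p (q 0) hpPw (le_trans hPwP' (hqP' 0)) hle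
      rw [Real.rpow_neg hw0.le, hwγ] at this
      linarith
    have hqstep : ∀ k, 2 * s * (q k : ℝ) ≤ (q (k+1) : ℝ) := by
      intro k
      have h1 : v (q (k+1)) ≤ (1/ρ) * v (q k) := by
        have e1 : v (q (k+1)) ≤ w * v p / s ^ (k+1) := (hqspec (k+1)).2
        have e2 : v p / s ^ k < v (q k) := hqlow k
        have e3 : w * v p / s ^ (k+1) = (w/s) * (v p / s ^ k) := by
          rw [pow_succ]; field_simp
        have e4 : (w/s) = 1/ρ := by
          rw [← hρw]; field_simp
        calc v (q (k+1)) ≤ (w/s) * (v p / s ^ k) := by rw [← e3]; exact e1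
          _ ≤ (w/s) * v (q k) := by
              apply mul_le_mul_of_nonneg_left e2.le (by positivity)
          _ = (1/ρ) * v (q k) := by rw [e4]
      have hPρq : Pρ ≤ P' := hPρP'
      have := hPρ (q k) (q (k+1)) (le_trans hPρq (hqP' k))
        (le_trans hPρq (hqP' (k+1))) h1
      have h4 : ((1:ℝ)/ρ) ^ (-γ) = 4 * s := by
        rw [one_div, Real.inv_rpow hρ0.le, Real.rpow_neg hρ0.le, inv_inv, hργ]
      rw [h4] at this
      linarith
    have hqgeo : ∀ k, (p:ℝ)/8 * (2*s)^k ≤ (q k : ℝ) := by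
      intro k
      induction k with
      | zero => simpa using hq0geo
      | succ k ih =>
        have h2s : (0:ℝ) ≤ 2*s := by positivity
        calc (p:ℝ)/8 * (2*s)^(k+1) = (2*s) * ((p:ℝ)/8 * (2*s)^k) := by ring
          _ ≤ (2*s) * (q k : ℝ) := mul_le_mul_of_nonneg_left ih h2s
          _ ≤ (q (k+1) : ℝ) := hqstep k
    have hqpos : ∀ k, (0:ℝ) < (q k : ℝ) := by
      intro k
      have : 1 ≤ q k := le_trans hP'1 (hqP' k)
      exact_mod_cast this
    -- slice events and R2 control
    set Ev : ℕ → Set Ω := fun k => {ω | m * s ^ k ≤ v p * (μ ω (δ / v p) : ℝ)}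
      with hEv_def
    have hEvMeas : ∀ k, MeasurableSet (Ev k) := by
      intro k
      have hμm : Measurable fun ω => (μ ω (δ / v p) : ℝ) :=
        (measurable_from_nat (f := fun n : ℕ => (n:ℝ))).comp (hμmeas (δ / v p))
      exact measurableSet_le measurable_const (hμm.const_mul (v p))
    have hR2k : ∀ k, ℙ (Ev k) ≤ ENNReal.ofReal (ε / (q k : ℝ)) := by
      intro k
      have hvq : 0 < v (q k) := hv (q k)
      have hsub : Ev k ⊆
          {ω | 1 / a' ≤ v (q k) * (μ ω ((m*a') / v (q k)) : ℝ) / (m*a')} := by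
        intro ω hω
        simp only [hEv_def, Set.mem_setOf_eq] at hω ⊢
        have htime : δ / v p ≤ (m*a') / v (q k) := by
          rw [div_le_div_iff₀ hvp hvq]
          have h1 : v (q k) ≤ w * v p := by
            have := (hqspec k).2
            have h2 : w * v p / s ^ k ≤ w * v p := div_le_self (by positivity) (hsk1 k)
            linarith
          nlinarith
        have hμm2 : (μ ω (δ / v p) : ℝ) ≤ (μ ω ((m*a') / v (q k)) : ℝ) := by
          exact_mod_cast hμmono ω htime
        have hthr : m / v (q k) ≤ (μ ω (δ / v p) : ℝ) := by
          rw [div_le_iff₀ hvq]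
          have h3 : v p / s ^ k < v (q k) := hqlow k
          rw [div_lt_iff₀ (by positivity)] at h3
          have h4 : m * s ^ k ≤ v p * (μ ω (δ / v p) : ℝ) := hω
          have h5 : (0:ℝ) ≤ (μ ω (δ / v p) : ℝ) := Nat.cast_nonneg _
          nlinarith
        have h6 : m ≤ v (q k) * (μ ω ((m*a') / v (q k)) : ℝ) := by
          rw [div_le_iff₀ hvq] at hthr
          nlinarith
        rw [le_div_iff₀ (by positivity : (0:ℝ) < m*a'), one_div,
          inv_mul_eq_div, div_le_iff₀ ha'0] at *
        nlinarith
      have hQ₁qk : Q₁ ≤ q k := le_trans hQ₁P' (hqP' k)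
      have h1 := hQ₁ (q k) hQ₁qk
      have h2 : (ℙ {ω | 1 / a' ≤ v (q k) * (μ ω ((m*a') / v (q k)) : ℝ) / (m*a')}).toReal
          ≤ ε / (q k : ℝ) := by
        rw [le_div_iff₀ (hqpos k)]
        calc _ = (q k : ℝ) * (ℙ _).toReal := mul_comm _ _
          _ ≤ ε := h1
      calc ℙ (Ev k) ≤ ℙ {ω | 1 / a' ≤ v (q k) * (μ ω ((m*a') / v (q k)) : ℝ) / (m*a')} :=
            measure_mono hsub
        _ = ENNReal.ofReal ((ℙ _).toReal) := (ENNReal.ofReal_toReal (measure_ne_top _ _)).symm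
        _ ≤ ENNReal.ofReal (ε / (q k : ℝ)) := ENNReal.ofReal_le_ofReal h2
    -- a.e. bound by slice indicators
    have hUae : ∀ᵐ ω ∂(ℙ : Measure Ω), U ω ∈ Set.Icc (0:ℝ) 1 := by
      have hz : ℙ (U ⁻¹' (Set.Icc (0:ℝ) 1)ᶜ) = 0 := by
        rw [← Measure.map_apply hUmeas measurableSet_Icc.compl, hUlaw,
          Measure.restrict_apply measurableSet_Icc.compl]
        simp
      rw [ae_iff]
      exact hz
    have hSmeas : MeasurableSet {ω | V ω < δ / v p} :=
      measurableSet_lt hVmeas measurable_const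
    set c : ℕ → ENNReal := fun k => ENNReal.ofReal ((C+1) * (m * s ^ (k+1)) / v p)
      with hc_def
    set F : Ω → ℝ := fun ω => (μ ω (V ω) : ℝ) *
        g (v p * A ω ⌊U ω * (μ ω (V ω) : ℝ)⌋₊,
          v p * (⌊U ω * (μ ω (V ω) : ℝ)⌋₊ : ℝ)) with hF_def
    have hdom : ∀ᵐ ω ∂(Measure.restrict ℙ {ω | V ω < δ / v p}),
        ENNReal.ofReal ‖F ω‖ ≤ ∑' k, (Ev k).indicator (fun _ => c k) ω := by
      filter_upwards [ae_restrict_of_ae hUae, ae_restrict_mem hSmeas] with ω hU hS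
      rw [Set.mem_Icc] at hU
      set n : ℕ := μ ω (V ω) with hn_def
      set z : ℕ := ⌊U ω * (n : ℝ)⌋₊ with hz_def
      by_cases hg : g (v p * A ω z, v p * (z:ℝ)) = 0
      · rw [hF_def]
        simp only [hg, mul_zero, norm_zero, ENNReal.ofReal_zero]
        simp only [← hn_def, ← hz_def, hg, mul_zero, norm_zero, ENNReal.ofReal_zero]
        exact zero_le
      · have hn0 : (0:ℝ) ≤ (n:ℝ) := Nat.cast_nonneg n
        have hUz : (z:ℝ) ≤ (n:ℝ) := by
          have h1 : U ω * (n:ℝ) ≤ (n:ℝ) := by nlinarith [hU.1, hU.2]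
          have h2 : (z:ℝ) ≤ U ω * (n:ℝ) := Nat.floor_le (by nlinarith [hU.1])
          linarith
        have hzn : z ≤ n := by exact_mod_cast hUz
        have hA0 : 0 ≤ A ω z := by
          rw [hA]
          exact Real.sInf_nonneg (fun t ht => ht.1)
        have hAle : A ω z ≤ V ω := by
          rw [hA]
          exact csInf_le ⟨0, fun t ht => ht.1⟩ ⟨(hVpos ω).le, hzn⟩
        have h1 : |v p * A ω z| < m := by
          rw [abs_of_nonneg (by positivity)]
          have h2 : v p * A ω z ≤ v p * V ω := mul_le_mul_of_nonneg_left hAle hvp.le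
          have h3 : v p * V ω < δ := by
            rw [lt_div_iff₀ hvp] at hS
            linarith [hS]
          linarith
        have h2 : m ≤ v p * (z:ℝ) := by
          by_contra hcon
          push_neg at hcon
          exact hg (hgzero _ _ h1 (by rwa [abs_of_nonneg (by positivity)]))
        have hnN : (n:ℝ) ≤ (μ ω (δ / v p) : ℝ) := by
          exact_mod_cast hμmono ω hS.le
        set N : ℝ := (μ ω (δ / v p) : ℝ) with hN_def
        have hmN : m ≤ v p * N := by
          have : v p * (z:ℝ) ≤ v p * N := by
            apply mul_le_mul_of_nonneg_left (le_trans hUz hnN) hvp.le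
          linarith
        set x : ℝ := v p * N with hx_def
        have hx0 : 0 < x := lt_of_lt_of_le hm hmN
        have hx1 : (1:ℝ) ≤ x / m := (one_le_div hm).2 hmN
        set k : ℕ := ⌊Real.logb s (x/m)⌋₊ with hk_def
        have hklb : m * s ^ k ≤ x := by
          have h5 : (k:ℝ) ≤ Real.logb s (x/m) :=
            Nat.floor_le (Real.logb_nonneg hs1 hx1)
          have h6 : s ^ (k:ℝ) ≤ s ^ (Real.logb s (x/m)) :=
            (Real.rpow_le_rpow_left_iff hs1).2 h5
          rw [Real.rpow_logb hs0 (ne_of_gt hs1) (by positivity), Real.rpow_natCast] at h6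
          calc m * s ^ k ≤ m * (x/m) := mul_le_mul_of_nonneg_left h6 hm.le
            _ = x := by field_simp
        have hkub : x < m * s ^ (k+1) := by
          have h5 : Real.logb s (x/m) < (k:ℝ) + 1 := Nat.lt_floor_add_one _
          have h6 : s ^ (Real.logb s (x/m)) < s ^ ((k:ℝ) + 1) :=
            (Real.rpow_lt_rpow_left_iff hs1).2 h5
          rw [Real.rpow_logb hs0 (ne_of_gt hs1) (by positivity)] at h6
          have h7 : s ^ ((k:ℝ)+1) = s ^ (k+1) := by
            rw [← Real.rpow_natCast s (k+1)]
            push_cast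
            ring_nf
          rw [h7] at h6
          rw [div_lt_iff₀ hm] at h6
          linarith
        have hmem : ω ∈ Ev k := by
          simp only [hEv_def, Set.mem_setOf_eq]
          exact hklb
        refine le_trans ?_ (ENNReal.le_tsum k)
        rw [Set.indicator_of_mem hmem]
        apply ENNReal.ofReal_le_ofReal
        rw [hF_def]
        simp only [norm_mul, Real.norm_eq_abs]
        have hgC : |g (v p * A ω z, v p * (z:ℝ))| ≤ C := hC _
        have hnb : (n:ℝ) ≤ (m * s ^ (k+1)) / v p := by
          rw [le_div_iff₀ hvp]
          calc (n:ℝ) * v p = v p * (n:ℝ) := mul_comm _ _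
            _ ≤ v p * N := mul_le_mul_of_nonneg_left hnN hvp.le
            _ ≤ m * s ^ (k+1) := hkub.le
        have habs : |(n:ℝ)| = (n:ℝ) := abs_of_nonneg hn0
        rw [habs]
        have hpos2 : (0:ℝ) ≤ (m * s ^ (k+1)) / v p := by positivity
        calc (n:ℝ) * |g (v p * A ω z, v p * (z:ℝ))|
            ≤ ((m * s ^ (k+1)) / v p) * C := by
              apply mul_le_mul hnb hgC (abs_nonneg _) hpos2
          _ ≤ (C+1) * (m * s ^ (k+1)) / v p := by
              rw [mul_comm, ← mul_div_assoc]
              have hnum : C * (m * s ^ (k+1)) ≤ (C+1) * (m * s ^ (k+1)) :=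
                mul_le_mul_of_nonneg_right (le_add_of_nonneg_right zero_le_one)
                  (by positivity)
              exact (div_le_div_iff_of_pos_right hvp).2 hnum
    -- lintegral bound
    have hlin : ∫⁻ ω, ENNReal.ofReal ‖F ω‖ ∂(Measure.restrict ℙ {ω | V ω < δ / v p})
        ≤ ∑' k, c k * ℙ (Ev k) := by
      calc ∫⁻ ω, ENNReal.ofReal ‖F ω‖ ∂(Measure.restrict ℙ {ω | V ω < δ / v p})
          ≤ ∫⁻ ω, (∑' k, (Ev k).indicator (fun _ => c k) ω)
              ∂(Measure.restrict ℙ {ω | V ω < δ / v p}) := lintegral_mono_ae hdom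
        _ = ∑' k, ∫⁻ ω, (Ev k).indicator (fun _ => c k) ω
              ∂(Measure.restrict ℙ {ω | V ω < δ / v p}) :=
            lintegral_tsum (fun k => (measurable_const.indicator (hEvMeas k)).aemeasurable)
        _ = ∑' k, c k * Measure.restrict ℙ {ω | V ω < δ / v p} (Ev k) := by
            congr 1
            funext k
            exact lintegral_indicator_const (hEvMeas k) (c k)
        _ ≤ ∑' k, c k * ℙ (Ev k) := by
            apply ENNReal.tsum_le_tsum
            intro k
            apply mul_le_mul_right
            rw [Measure.restrict_apply (hEvMeas k)]
            exact measure_mono Set.inter_subset_left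
    -- sum the geometric series
    set Kp : ℝ := 8 * (C+1) * m * s * ε / (v p * p) with hKp_def
    have hKp0 : 0 ≤ Kp := by positivity
    have hsum : ∑' k, c k * ℙ (Ev k) ≤ ENNReal.ofReal Kp * 2 := by
      have hterm : ∀ k : ℕ, c k * ℙ (Ev k) ≤ ENNReal.ofReal (Kp * (1/2)^k) := by
        intro k
        have hc0 : (0:ℝ) ≤ (C+1) * (m * s ^ (k+1)) / v p := by positivity
        calc c k * ℙ (Ev k) ≤ c k * ENNReal.ofReal (ε / (q k : ℝ)) :=
              mul_le_mul_right (hR2k k) _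
          _ = ENNReal.ofReal (((C+1) * (m * s ^ (k+1)) / v p) * (ε / (q k : ℝ))) := by
              rw [hc_def, ← ENNReal.ofReal_mul hc0]
          _ ≤ ENNReal.ofReal (Kp * (1/2)^k) := by
              apply ENNReal.ofReal_le_ofReal
              have hlow : (0:ℝ) < (p:ℝ)/8 * (2*s)^k := by positivity
              have hnum : (0:ℝ) ≤ ((C+1) * (m * s ^ (k+1)) / v p) * ε := by positivity
              have hstep : ((C+1) * (m * s ^ (k+1)) / v p) * (ε / (q k : ℝ))
                  = (((C+1) * (m * s ^ (k+1)) / v p) * ε) * ((q k : ℝ))⁻¹ := by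
                ring
              rw [hstep]
              have hinv : ((q k : ℝ))⁻¹ ≤ ((p:ℝ)/8 * (2*s)^k)⁻¹ :=
                inv_anti₀ hlow (hqgeo k)
              calc (((C+1) * (m * s ^ (k+1)) / v p) * ε) * ((q k : ℝ))⁻¹
                  ≤ (((C+1) * (m * s ^ (k+1)) / v p) * ε) * ((p:ℝ)/8 * (2*s)^k)⁻¹ :=
                    mul_le_mul_of_nonneg_left hinv hnum
                _ = Kp * (1/2)^k := by
                    rw [hKp_def, mul_pow, pow_succ, one_div_pow]
                    have h2k : (0:ℝ) < (2:ℝ)^k := by positivity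
                    have hsk : (0:ℝ) < s^k := by positivity
                    field_simp
      calc ∑' k, c k * ℙ (Ev k) ≤ ∑' k, ENNReal.ofReal (Kp * (1/2)^k) :=
            ENNReal.tsum_le_tsum hterm
        _ = ∑' (k:ℕ), ENNReal.ofReal Kp * (ENNReal.ofReal (1/2))^k := by
            congr 1
            funext k
            rw [ENNReal.ofReal_mul hKp0, ENNReal.ofReal_pow (by norm_num)]
        _ = ENNReal.ofReal Kp * ∑' (k:ℕ), (ENNReal.ofReal (1/2))^k :=
            ENNReal.tsum_mul_left
        _ = ENNReal.ofReal Kp * 2 := by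
            have h12 : ENNReal.ofReal (1/2 : ℝ) = 2⁻¹ := by
              rw [one_div, ENNReal.ofReal_inv_of_pos (by norm_num)]
              norm_num
            rw [h12, ENNReal.tsum_geometric, ENNReal.one_sub_inv_two, inv_inv]
    -- conclude
    have hnorm : ‖∫ ω in {ω | V ω < δ / v p}, F ω‖
        ≤ (∫⁻ ω, ENNReal.ofReal ‖F ω‖ ∂(Measure.restrict ℙ {ω | V ω < δ / v p})).toReal :=
      norm_integral_le_lintegral_norm F
    have hfin2 : (∫⁻ ω, ENNReal.ofReal ‖F ω‖ ∂(Measure.restrict ℙ {ω | V ω < δ / v p})).toReal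
        ≤ 2 * Kp := by
      have hne : ENNReal.ofReal Kp * 2 ≠ ⊤ := by
        apply ENNReal.mul_ne_top ENNReal.ofReal_ne_top (by norm_num)
      have := ENNReal.toReal_mono hne (le_trans hlin hsum)
      rwa [ENNReal.toReal_mul, ENNReal.toReal_ofReal hKp0, ENNReal.toReal_ofNat,
        mul_comm] at this
    have habs : |(p : ℝ) * v p * ∫ ω in {ω | V ω < δ / v p}, F ω|
        = (p:ℝ) * v p * ‖∫ ω in {ω | V ω < δ / v p}, F ω‖ := by
      rw [abs_mul, abs_mul, abs_of_nonneg hpR.le, abs_of_nonneg hvp.le,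
        Real.norm_eq_abs]
    calc |(p : ℝ) * v p * ∫ ω in {ω | V ω < δ / v p}, F ω|
        = (p:ℝ) * v p * ‖∫ ω in {ω | V ω < δ / v p}, F ω‖ := habs
      _ ≤ (p:ℝ) * v p * (2 * Kp) := by
          apply mul_le_mul_of_nonneg_left (le_trans hnorm hfin2) (by positivity)
      _ = 16 * m * s * (C+1) * ε := by
          rw [hKp_def]
          field_simp
          ring
  -- finish: tendsto from the quantitative estimate
  rw [Metric.tendsto_atTop]
  intro ε' hε'
  have hK : (0:ℝ) < 16 * m * s * (C+1) := by positivity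
  obtain ⟨P, hP⟩ := main (ε' / (2 * (16 * m * s * (C+1)))) (by positivity)
  refine ⟨P, fun p hp => ?_⟩
  rw [Real.dist_eq, sub_zero]
  calc |(p : ℝ) * v p * ∫ ω in {ω | V ω < δ / v p},
          (μ ω (V ω) : ℝ) * g (v p * A ω ⌊U ω * (μ ω (V ω) : ℝ)⌋₊,
            v p * (⌊U ω * (μ ω (V ω) : ℝ)⌋₊ : ℝ))|
      ≤ 16 * m * s * (C+1) * (ε' / (2 * (16 * m * s * (C+1)))) := hP p hp
    _ = ε' / 2 := by field_simp
    _ < ε' := by linarith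
end
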